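/- arXiv:1402.6134 — 3 statements merged into one kernel-verified Lean document; each statement's English description precedes it below -/
import Mathlib

section
/- Let (X,d) be a metric space and μ a Borel measure on X with 0 < μ(B(x,r)) < ∞ for every closed ball B(x,r), which is globally doubling: there is C_D ≥ 1 with μ(B(x,2r)) ≤ C_D μ(B(x,r)) for all x ∈ X and r > 0. Let E ⊆ X, q > 0 and C₀ > 0 be such that ∫_{B(x,r)} dist(y,E)^{−q} dμ(y) ≤ C₀ r^{−q} μ(B(x,r)) for every x ∈ E and all 0 < r < diam(E). Then there exist δ > 0 and C > 0, depending only on q, C₀ and C_D, such that ∫_{B(x,r)} dist(y,E)^{−(q+δ)} dμ(y) ≤ C r^{−(q+δ)} μ(B(x,r)) for every x ∈ E and all 0 < r < diam(E). -/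
open MeasureTheory Metric ENNReal

section AikawaAux

private lemma aik_rpow_anti {a b : ℝ≥0∞} (h : a ≤ b) {c : ℝ} (hc : 0 ≤ c) :
    b ^ (-c) ≤ a ^ (-c) := by
  rw [ENNReal.rpow_neg, ENNReal.rpow_neg]
  exact ENNReal.inv_le_inv.mpr (ENNReal.rpow_le_rpow h hc)

private lemma aik_cancel {a : ℝ} (ha : 0 < a) (q : ℝ) {Z I : ℝ≥0∞}
    (h : ENNReal.ofReal a ^ (-q) * Z ≤ I) : Z ≤ ENNReal.ofReal (a ^ q) * I := by
  have h0 : (ENNReal.ofReal a) ≠ 0 := by simp [ha, ENNReal.ofReal_eq_zero, not_le]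
  have ht : (ENNReal.ofReal a) ≠ ⊤ := ENNReal.ofReal_ne_top
  calc Z = (ENNReal.ofReal a ^ q * ENNReal.ofReal a ^ (-q)) * Z := by
        rw [← ENNReal.rpow_add _ _ h0 ht]; simp
    _ = ENNReal.ofReal a ^ q * (ENNReal.ofReal a ^ (-q) * Z) := by rw [mul_assoc]
    _ ≤ ENNReal.ofReal a ^ q * I := mul_le_mul_right h _
    _ = ENNReal.ofReal (a ^ q) * I := by rw [ENNReal.ofReal_rpow_of_pos ha]

private lemma aik_dbl {X : Type*} [MetricSpace X] [MeasurableSpace X]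
    (μ : Measure X) (C_D : ℝ)
    (hdbl : ∀ (x : X) (r : ℝ), 0 < r →
      μ (closedBall x (2 * r)) ≤ ENNReal.ofReal C_D * μ (closedBall x r)) :
    ∀ (k : ℕ) (x : X) (r : ℝ), 0 < r →
      μ (closedBall x (2 ^ k * r)) ≤ (ENNReal.ofReal C_D) ^ k * μ (closedBall x r) := by
  intro k
  induction k with
  | zero => intro x r _; simp
  | succ k ih =>
    intro x r hr
    have h1 : (2:ℝ) ^ (k+1) * r = 2 ^ k * (2 * r) := by ring
    calc μ (closedBall x (2 ^ (k+1) * r)) = μ (closedBall x (2 ^ k * (2 * r))) := by rw [h1]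
      _ ≤ (ENNReal.ofReal C_D) ^ k * μ (closedBall x (2*r)) := ih x (2*r) (by linarith)
      _ ≤ (ENNReal.ofReal C_D) ^ k * (ENNReal.ofReal C_D * μ (closedBall x r)) :=
          mul_le_mul_right (hdbl x r hr) _
      _ = (ENNReal.ofReal C_D) ^ (k+1) * μ (closedBall x r) := by ring

private lemma aik_dbl' {X : Type*} [MetricSpace X] [MeasurableSpace X]
    (μ : Measure X) (C_D : ℝ)
    (hdbl : ∀ (x : X) (r : ℝ), 0 < r →
      μ (closedBall x (2 * r)) ≤ ENNReal.ofReal C_D * μ (closedBall x r))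
    (k : ℕ) (x : X) {a b : ℝ} (ha : 0 < a) (hb : b ≤ 2 ^ k * a) :
    μ (closedBall x b) ≤ (ENNReal.ofReal C_D) ^ k * μ (closedBall x a) :=
  (measure_mono (closedBall_subset_closedBall hb)).trans (aik_dbl μ C_D hdbl k x a ha)

private lemma aik_cover {X : Type*} [MetricSpace X] [MeasurableSpace X] [BorelSpace X]
    (μ : Measure X) (E : Set X) (q C₁ C_D : ℝ) (hq : 0 < q) (hC₁ : 0 ≤ C₁) (hCD : 1 ≤ C_D)
    (hvol : ∀ (x : X) (r : ℝ), 0 < r →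
      0 < μ (closedBall x r) ∧ μ (closedBall x r) < ⊤)
    (hdbl : ∀ (x : X) (r : ℝ), 0 < r →
      μ (closedBall x (2 * r)) ≤ ENNReal.ofReal C_D * μ (closedBall x r))
    (x : X) (ρ R' : ℝ) (hρ : 0 < ρ) (hR' : 0 < R')
    (hA4 : ∀ z ∈ E, ∫⁻ y in closedBall z (4*ρ), (EMetric.infEdist y E) ^ (-q) ∂μ ≤
        ENNReal.ofReal C₁ * ENNReal.ofReal ((4*ρ) ^ (-q)) * μ (closedBall z (4*ρ))) :
    ∃ u : Set X, u.Countable ∧ u ⊆ E ∧ (∀ z ∈ u, z ∈ closedBall x (R' + ρ)) ∧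
      u.PairwiseDisjoint (fun z => closedBall z ρ) ∧
      ∫⁻ y in closedBall x R' ∩ {y | EMetric.infEdist y E < ENNReal.ofReal ρ},
          (EMetric.infEdist y E) ^ (-q) ∂μ ≤
        ENNReal.ofReal (C₁ * C_D ^ (2:ℕ)) * ENNReal.ofReal (ρ ^ (-q)) *
          ∑' z : u, μ (closedBall (z : X) ρ) := by
  classical
  obtain ⟨u, hut, hdisj, henl⟩ :=
    Vitali.exists_disjoint_subfamily_covering_enlargement_closedBall
      (E ∩ closedBall x (R' + ρ)) (id : X → X) (fun _ => ρ) ρ (fun _ _ => le_rfl) 4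
      (by norm_num)
  have huE : u ⊆ E := fun z hz => (hut hz).1
  have huB : ∀ z ∈ u, z ∈ closedBall x (R' + ρ) := fun z hz => (hut hz).2
  have hcnt : u.Countable := by
    have hAs : ∀ z : u, MeasurableSet (closedBall (z : X) ρ) :=
      fun z => measurableSet_closedBall
    have hd : Pairwise (Function.onFun Disjoint fun z : u => closedBall (z : X) ρ) := by
      intro z w hzw
      exact hdisj z.2 w.2 (fun h => hzw (Subtype.ext h))
    have hfin : μ (⋃ z : u, closedBall (z : X) ρ) ≠ ⊤ := by
      refine ne_of_lt (lt_of_le_of_lt (measure_mono ?_)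
        (hvol x (R' + 2 * ρ) (by linarith)).2)
      refine Set.iUnion_subset fun z => ?_
      refine closedBall_subset_closedBall' ?_
      have := (huB z z.2)
      rw [mem_closedBall] at this
      linarith
    have := MeasureTheory.Measure.countable_meas_pos_of_disjoint_of_meas_iUnion_ne_top
      μ hAs hd hfin
    have hall : {z : u | 0 < μ (closedBall (z : X) ρ)} = Set.univ := by
      ext z; simp [(hvol (z : X) ρ hρ).1]
    rw [hall] at this
    rw [← Set.countable_coe_iff]
    exact Set.countable_univ_iff.mp this
  have : Countable u := hcnt.to_subtype
  refine ⟨u, hcnt, huE, huB, hdisj, ?_⟩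
  have hcov : closedBall x R' ∩ {y | EMetric.infEdist y E < ENNReal.ofReal ρ} ⊆
      ⋃ z : u, closedBall (z : X) (4 * ρ) := by
    rintro y ⟨hyB, hyd⟩
    obtain ⟨z, hzE, hz⟩ := EMetric.infEdist_lt_iff.mp hyd
    have hdist : dist y z < ρ := edist_lt_ofReal.mp hz
    have hzt : z ∈ E ∩ closedBall x (R' + ρ) := by
      refine ⟨hzE, ?_⟩
      rw [mem_closedBall] at hyB ⊢
      have := dist_triangle z y x
      rw [dist_comm z y] at this
      linarith
    obtain ⟨b, hbu, hb⟩ := henl z hzt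
    have hyb : y ∈ closedBall z ρ := by
      rw [mem_closedBall]; exact hdist.le
    refine Set.mem_iUnion.mpr ⟨⟨b, hbu⟩, ?_⟩
    have := hb hyb
    simpa [mul_comm] using this
  calc ∫⁻ y in closedBall x R' ∩ {y | EMetric.infEdist y E < ENNReal.ofReal ρ},
          (EMetric.infEdist y E) ^ (-q) ∂μ
      ≤ ∫⁻ y in ⋃ z : u, closedBall (z : X) (4 * ρ), (EMetric.infEdist y E) ^ (-q) ∂μ :=
        lintegral_mono_set hcov
    _ ≤ ∑' z : u, ∫⁻ y in closedBall (z : X) (4 * ρ), (EMetric.infEdist y E) ^ (-q) ∂μ :=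
        lintegral_iUnion_le _ _
    _ ≤ ∑' z : u, (ENNReal.ofReal C₁ * ENNReal.ofReal (ρ ^ (-q)) *
          ((ENNReal.ofReal C_D) ^ (2:ℕ) * μ (closedBall (z : X) ρ))) := by
        refine ENNReal.tsum_le_tsum fun z => ?_
        have h1 := hA4 (z : X) (huE z.2)
        have h2 : ENNReal.ofReal ((4*ρ) ^ (-q)) ≤ ENNReal.ofReal (ρ ^ (-q)) :=
          ENNReal.ofReal_le_ofReal
            (Real.rpow_le_rpow_of_nonpos hρ (by linarith) (by linarith))
        have h3 : μ (closedBall (z : X) (4*ρ)) ≤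
            (ENNReal.ofReal C_D) ^ (2:ℕ) * μ (closedBall (z : X) ρ) := by
          have := aik_dbl μ C_D hdbl 2 (z : X) ρ hρ
          have h4 : (4:ℝ) * ρ = 2 ^ 2 * ρ := by norm_num
          rw [h4]; exact this
        calc ∫⁻ y in closedBall (z : X) (4 * ρ), (EMetric.infEdist y E) ^ (-q) ∂μ
            ≤ ENNReal.ofReal C₁ * ENNReal.ofReal ((4*ρ) ^ (-q)) *
                μ (closedBall (z : X) (4*ρ)) := h1
          _ ≤ ENNReal.ofReal C₁ * ENNReal.ofReal (ρ ^ (-q)) *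
                ((ENNReal.ofReal C_D) ^ (2:ℕ) * μ (closedBall (z : X) ρ)) := by
              exact mul_le_mul' (mul_le_mul' le_rfl h2) h3
    _ = ENNReal.ofReal (C₁ * C_D ^ (2:ℕ)) * ENNReal.ofReal (ρ ^ (-q)) *
          ∑' z : u, μ (closedBall (z : X) ρ) := by
        rw [← ENNReal.tsum_mul_left]
        congr 1
        ext z
        rw [ENNReal.ofReal_mul hC₁, ENNReal.ofReal_pow (by linarith : (0:ℝ) ≤ C_D)]
        ring

end AikawaAux

set_option maxHeartbeats 4000000 in
/-- (Lemma 2.1 of the paper.) Self-improvement of the Aikawa condition: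
if `E ⊆ X` satisfies the Aikawa condition with exponent `q > 0` and constant `C₀` for a
globally doubling Borel measure `μ`, then it satisfies it with some exponent `q + δ`,
`δ > 0`. -/
theorem aikawa_self_improvement
    {X : Type*} [MetricSpace X] [MeasurableSpace X] [BorelSpace X]
    (μ : Measure X)
    (hvol : ∀ (x : X) (r : ℝ), 0 < r →
      0 < μ (Metric.closedBall x r) ∧ μ (Metric.closedBall x r) < ⊤)
    (C_D : ℝ) (hCD : 1 ≤ C_D)
    (hdbl : ∀ (x : X) (r : ℝ), 0 < r →
      μ (Metric.closedBall x (2 * r)) ≤ ENNReal.ofReal C_D * μ (Metric.closedBall x r))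
    (E : Set X) (q C₀ : ℝ) (hq : 0 < q) (hC₀ : 0 < C₀)
    (hA : ∀ x ∈ E, ∀ r : ℝ, 0 < r → ENNReal.ofReal r < EMetric.diam E →
      ∫⁻ y in Metric.closedBall x r, (EMetric.infEdist y E) ^ (-q) ∂μ ≤
        ENNReal.ofReal (C₀ * r ^ (-q)) * μ (Metric.closedBall x r)) :
    ∃ δ : ℝ, 0 < δ ∧ ∃ C : ℝ, 0 < C ∧
      ∀ x ∈ E, ∀ r : ℝ, 0 < r → ENNReal.ofReal r < EMetric.diam E →
        ∫⁻ y in Metric.closedBall x r, (EMetric.infEdist y E) ^ (-(q + δ)) ∂μ ≤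
          ENNReal.ofReal (C * r ^ (-(q + δ))) * μ (Metric.closedBall x r) := by
  classical
  have hCD0 : (0:ℝ) < C_D := lt_of_lt_of_le one_pos hCD
  obtain ⟨C₁, hC₁def⟩ : ∃ _x : ℝ, _x = C₀ + 1 := ⟨_, rfl⟩
  have hC₁1 : 1 ≤ C₁ := by simp only [hC₁def]; linarith
  have hC₁0 : 0 < C₁ := by linarith
  obtain ⟨s, hs⟩ : ∃ s : ℕ, ((2:ℝ)⁻¹ ^ q) ^ s < 1 / (2 * C₁) :=
    exists_pow_lt_of_lt_one (by positivity)
      (Real.rpow_lt_one (by norm_num) (by norm_num) hq)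
  obtain ⟨τ, hτdef⟩ : ∃ _x : ℝ, _x = (2:ℝ)⁻¹ ^ s := ⟨_, rfl⟩
  have hτ0 : 0 < τ := by rw [hτdef]; positivity
  have hτq : C₁ * τ ^ q ≤ 1/2 := by
    have h1 : τ ^ q = ((2:ℝ)⁻¹ ^ q) ^ s := by
      rw [hτdef, ← Real.rpow_natCast ((2:ℝ)⁻¹) s, ← Real.rpow_natCast ((2:ℝ)⁻¹ ^ q) s,
        ← Real.rpow_mul (by norm_num), ← Real.rpow_mul (by norm_num), mul_comm]
    rw [h1]
    rw [div_eq_mul_inv, one_mul] at hs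
    have h2 : ((2:ℝ)⁻¹ ^ q) ^ s * C₁ < (2 * C₁)⁻¹ * C₁ := by
      exact mul_lt_mul_of_pos_right hs hC₁0
    have h3 : ((2:ℝ) * C₁)⁻¹ * C₁ = 1/2 := by field_simp
    nlinarith [h2, h3]
  obtain ⟨K, hKdef⟩ : ∃ _x : ℝ, _x = 2 * C₁ * C_D ^ (2:ℕ) := ⟨_, rfl⟩
  have hK1 : 1 ≤ K := by
    rw [hKdef]
    have h1 : (1:ℝ) ≤ C_D ^ (2:ℕ) := one_le_pow₀ hCD
    nlinarith
  have hK0 : 0 < K := by linarith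
  obtain ⟨θ, hθdef⟩ : ∃ _x : ℝ, _x = K / (K + 1) := ⟨_, rfl⟩
  have hθ0 : 0 < θ := by rw [hθdef]; positivity
  have hθ1 : θ < 1 := by
    rw [hθdef, div_lt_one (by linarith)]; linarith
  obtain ⟨p, hpdef⟩ : ∃ _x : ℕ, _x = s + 1 := ⟨_, rfl⟩
  have hp0 : 0 < p := by rw [hpdef]; omega
  obtain ⟨δ, hδdef⟩ : ∃ _x : ℝ, _x = min 1 (Real.logb 2 θ⁻¹ / (2 * p)) := ⟨_, rfl⟩
  have hp' : (0:ℝ) < (p:ℝ) := by exact_mod_cast hp0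
  have hδ0 : 0 < δ := by
    rw [hδdef]
    refine lt_min one_pos ?_
    have h1 : 1 < θ⁻¹ := (one_lt_inv₀ hθ0).mpr hθ1
    have h2 := Real.logb_pos (by norm_num : (1:ℝ) < 2) h1
    exact div_pos h2 (by linarith)
  have hδ1 : δ ≤ 1 := by rw [hδdef]; exact min_le_left _ _
  obtain ⟨ν, hνdef⟩ : ∃ _x : ℝ, _x = 2 ^ ((p:ℝ) * δ) * θ := ⟨_, rfl⟩
  have hν0 : 0 < ν := by rw [hνdef]; exact mul_pos (by positivity) hθ0
  have hν1 : ν < 1 := by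
    have h1 : (p:ℝ) * δ ≤ Real.logb 2 θ⁻¹ / 2 := by
      have h2 : δ ≤ Real.logb 2 θ⁻¹ / (2 * p) := by rw [hδdef]; exact min_le_right _ _
      have h3 : (p:ℝ) * (Real.logb 2 θ⁻¹ / (2 * p)) = Real.logb 2 θ⁻¹ / 2 := by
        field_simp
      nlinarith [h2, hp']
    have h2 : (2:ℝ) ^ ((p:ℝ) * δ) ≤ 2 ^ (Real.logb 2 θ⁻¹ / 2) :=
      Real.rpow_le_rpow_of_exponent_le (by norm_num) h1
    have h3 : (2:ℝ) ^ (Real.logb 2 θ⁻¹ / 2) = θ⁻¹ ^ ((1:ℝ)/2) := by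
      rw [div_eq_mul_inv, Real.rpow_mul (by norm_num : (0:ℝ) ≤ 2),
        Real.rpow_logb (by norm_num) (by norm_num) (by positivity)]
      norm_num
    have h5 : θ⁻¹ ^ ((1:ℝ)/2) * θ = θ ^ ((1:ℝ)/2) := by
      rw [Real.inv_rpow hθ0.le, ← Real.rpow_neg hθ0.le]
      calc θ ^ (-((1:ℝ)/2)) * θ = θ ^ (-((1:ℝ)/2)) * θ ^ (1:ℝ) := by rw [Real.rpow_one]
        _ = θ ^ (-((1:ℝ)/2) + 1) := (Real.rpow_add hθ0 _ _).symm
        _ = θ ^ ((1:ℝ)/2) := by norm_num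
    have h6 : θ ^ ((1:ℝ)/2) < 1 := Real.rpow_lt_one hθ0.le hθ1 (by norm_num)
    have h7 : ν ≤ θ⁻¹ ^ ((1:ℝ)/2) * θ := by
      rw [hνdef]
      rw [h3] at h2
      exact mul_le_mul_of_nonneg_right h2 hθ0.le
    nlinarith [h7, h5, h6]
  obtain ⟨M₀, hM₀def⟩ : ∃ _x : ℝ, _x = C₁ * C_D ^ (4:ℕ) * 8 ^ q := ⟨_, rfl⟩
  have hM₀0 : 0 < M₀ := by rw [hM₀def]; exact mul_pos (mul_pos hC₁0 (pow_pos hCD0 4)) (Real.rpow_pos_of_pos (by norm_num) q)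
  obtain ⟨C, hCdef⟩ : ∃ _x : ℝ, _x = 8 ^ (q + 1) + 2 ^ ((3 + (p:ℝ)) * δ) * M₀ * (1 - ν)⁻¹ := ⟨_, rfl⟩
  have hC0 : 0 < C := by
    rw [hCdef]
    have h1 : (0:ℝ) < 1 - ν := by linarith
    have h2 : (0:ℝ) < (8:ℝ) ^ (q+1) := by positivity
    have h3 : (0:ℝ) < 2 ^ ((3 + (p:ℝ)) * δ) * M₀ * (1 - ν)⁻¹ := mul_pos (mul_pos (Real.rpow_pos_of_pos (by norm_num) _) hM₀0) (inv_pos.mpr h1)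
    linarith
  refine ⟨δ, hδ0, C, hC0, ?_⟩
  intro x hx r hr hrd
  -- local definitions
  have hdmeas : Measurable (fun y : X => EMetric.infEdist y E) :=
    EMetric.continuous_infEdist.measurable
  have hgq : Measurable (fun y : X => (EMetric.infEdist y E) ^ (-q)) :=
    (ENNReal.continuous_rpow_const.comp EMetric.continuous_infEdist).measurable
  obtain ⟨ρ, hρdef⟩ : ∃ _x : ℕ → ℝ, _x = fun j => (2:ℝ)⁻¹ ^ j * r := ⟨_, rfl⟩
  have hρpos : ∀ j, 0 < ρ j := fun j => by simp only [hρdef]; positivity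
  have hρle : ∀ j, ρ j ≤ r := by
    intro j
    simp only [hρdef]
    have h1 : (2:ℝ)⁻¹ ^ j ≤ 1 := pow_le_one₀ (by norm_num) (by norm_num)
    simpa using mul_le_mul_of_nonneg_right h1 hr.le
  have hρanti : ∀ i j, i ≤ j → ρ j ≤ ρ i := by
    intro i j hij
    have h1 : (2:ℝ)⁻¹ ^ j ≤ (2:ℝ)⁻¹ ^ i :=
      pow_le_pow_of_le_one (by norm_num) (by norm_num) hij
    simp only [hρdef]
    exact mul_le_mul_of_nonneg_right h1 hr.le
  have hρhalf : ∀ j, ρ j = 2 * ρ (j + 1) := by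
    intro j
    simp only [hρdef, pow_succ]
    ring
  obtain ⟨R, hRdef⟩ : ∃ _x : ℕ → ℝ, _x = fun j => 2 * r + 8 * ρ j := ⟨_, rfl⟩
  have hRpos : ∀ j, 0 < R j := fun j => by
    have := hρpos j; simp only [hRdef]; linarith
  have hRanti : ∀ i j, i ≤ j → R j ≤ R i := by
    intro i j hij
    have := hρanti i j hij
    simp only [hRdef]; linarith
  have hrR : ∀ j, r ≤ R j := fun j => by
    have := hρpos j; simp only [hRdef]; linarith
  set S : ℕ → Set X := fun j =>
    closedBall x (R j) ∩ {y | EMetric.infEdist y E < ENNReal.ofReal (ρ j)} with hSdef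
  have hSmeas : ∀ j, MeasurableSet (S j) := fun j =>
    measurableSet_closedBall.inter (hdmeas measurableSet_Iio)
  have hSanti : ∀ i j, i ≤ j → S j ⊆ S i := by
    intro i j hij y hy
    refine ⟨closedBall_subset_closedBall (hRanti i j hij) hy.1, ?_⟩
    exact lt_of_lt_of_le hy.2 (ENNReal.ofReal_le_ofReal (hρanti i j hij))
  obtain ⟨A, hAdef⟩ : ∃ _x : ℕ → ℝ≥0∞, _x = fun j => ∫⁻ y in S j, (EMetric.infEdist y E) ^ (-q) ∂μ := ⟨_, rfl⟩
  have hAanti : ∀ i j, i ≤ j → A j ≤ A i := fun i j h => by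
    simp only [hAdef]; exact lintegral_mono_set (hSanti i j h)
  have hdiam : ∀ a : ℝ, a ≤ r → ENNReal.ofReal a < EMetric.diam E :=
    fun a ha => lt_of_le_of_lt (ENNReal.ofReal_le_ofReal ha) hrd
  have hA₁ : ∀ z ∈ E, ∀ a : ℝ, 0 < a → a ≤ r →
      ∫⁻ y in closedBall z a, (EMetric.infEdist y E) ^ (-q) ∂μ ≤
        ENNReal.ofReal C₁ * ENNReal.ofReal (a ^ (-q)) * μ (closedBall z a) := by
    intro z hz a ha har
    refine le_trans (hA z hz a ha (hdiam a har)) ?_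
    rw [ENNReal.ofReal_mul hC₀.le]
    exact mul_le_mul' (mul_le_mul' (ENNReal.ofReal_le_ofReal (by linarith)) le_rfl) le_rfl
  have h4ρ : ∀ j : ℕ, 3 ≤ j → 4 * ρ j ≤ r := by
    intro j hj
    have h1 : (2:ℝ)⁻¹ ^ j ≤ (2:ℝ)⁻¹ ^ 3 :=
      pow_le_pow_of_le_one (by norm_num) (by norm_num) hj
    have h2 : ((2:ℝ)⁻¹) ^ 3 = 1/8 := by norm_num
    simp only [hρdef]
    linarith [hr, mul_le_mul_of_nonneg_right h1 hr.le]
  -- the Aikawa hypothesis at scale 4 * ρ j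
  have hA4 : ∀ j : ℕ, 3 ≤ j → ∀ z ∈ E,
      ∫⁻ y in closedBall z (4 * ρ j), (EMetric.infEdist y E) ^ (-q) ∂μ ≤
        ENNReal.ofReal C₁ * ENNReal.ofReal ((4 * ρ j) ^ (-q)) * μ (closedBall z (4 * ρ j)) :=
    fun j hj z hz => hA₁ z hz _ (by have := hρpos j; linarith) (h4ρ j hj)
  -- base estimate
  have hbase : A 3 ≤ ENNReal.ofReal M₀ * (ENNReal.ofReal (r ^ (-q)) * μ (closedBall x r)) := by
    obtain ⟨u, hcnt, huE, huB, hdisj, hest⟩ :=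
      aik_cover μ E q C₁ C_D hq hC₁0.le hCD hvol hdbl x (ρ 3) (R 3) (hρpos 3) (hRpos 3)
        (hA4 3 le_rfl)
    have hA3 : A 3 ≤ ENNReal.ofReal (C₁ * C_D ^ (2:ℕ)) * ENNReal.ofReal ((ρ 3) ^ (-q)) *
        ∑' z : u, μ (closedBall (z : X) (ρ 3)) := by
      simp only [hAdef, hSdef]; exact hest
    have hρ3 : ρ 3 = (8:ℝ)⁻¹ * r := by
      simp only [hρdef]; norm_num
    have hsum : ∑' z : u, μ (closedBall (z : X) (ρ 3)) ≤
        (ENNReal.ofReal C_D) ^ (2:ℕ) * μ (closedBall x r) := by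
      have hd : Pairwise (Function.onFun Disjoint fun z : u => closedBall (z : X) (ρ 3)) := by
        intro z w hzw; exact hdisj z.2 w.2 (fun h => hzw (Subtype.ext h))
      have h1 : ∑' z : u, μ (closedBall (z : X) (ρ 3)) ≤
          μ (⋃ z : u, closedBall (z : X) (ρ 3)) :=
        MeasureTheory.tsum_meas_le_meas_iUnion_of_disjoint μ
          (fun _ => measurableSet_closedBall) hd
      have h2 : (⋃ z : u, closedBall (z : X) (ρ 3)) ⊆ closedBall x (4 * r) := by
        refine Set.iUnion_subset fun z => ?_
        refine closedBall_subset_closedBall' ?_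
        have hz := huB z z.2
        rw [mem_closedBall] at hz
        have hR3 : R 3 = 2 * r + 8 * ρ 3 := by simp only [hRdef]
        rw [hρ3] at hR3 ⊢
        linarith
      have h3 : μ (closedBall x (4 * r)) ≤ (ENNReal.ofReal C_D) ^ (2:ℕ) * μ (closedBall x r) :=
        aik_dbl' μ C_D hdbl 2 x hr (by norm_num)
      exact h1.trans ((measure_mono h2).trans h3)
    have hρ3q : (ρ 3 : ℝ) ^ (-q) = 8 ^ q * r ^ (-q) := by
      rw [hρ3, Real.mul_rpow (by norm_num) hr.le]
      congr 1
      rw [Real.inv_rpow (by norm_num : (0:ℝ) ≤ 8), Real.rpow_neg (by norm_num : (0:ℝ) ≤ 8),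
        inv_inv]
    have h8q : (0:ℝ) ≤ 8 ^ q * r ^ (-q) := by positivity
    calc A 3 ≤ ENNReal.ofReal (C₁ * C_D ^ (2:ℕ)) * ENNReal.ofReal ((ρ 3) ^ (-q)) *
          ∑' z : u, μ (closedBall (z : X) (ρ 3)) := hA3
      _ ≤ ENNReal.ofReal (C₁ * C_D ^ (2:ℕ)) * ENNReal.ofReal ((ρ 3) ^ (-q)) *
          ((ENNReal.ofReal C_D) ^ (2:ℕ) * μ (closedBall x r)) := mul_le_mul_right hsum _
      _ = ENNReal.ofReal (C₁ * C_D ^ (2:ℕ) * (8 ^ q * r ^ (-q)) * C_D ^ (2:ℕ)) *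
          μ (closedBall x r) := by
          rw [hρ3q, ENNReal.ofReal_mul (by positivity : (0:ℝ) ≤ C₁ * C_D ^ (2:ℕ) * (8 ^ q * r ^ (-q))),
            ENNReal.ofReal_mul (by positivity : (0:ℝ) ≤ C₁ * C_D ^ (2:ℕ)),
            ENNReal.ofReal_pow hCD0.le]
          ring
      _ = ENNReal.ofReal M₀ * (ENNReal.ofReal (r ^ (-q)) * μ (closedBall x r)) := by
          have hre : C₁ * C_D ^ (2:ℕ) * (8 ^ q * r ^ (-q)) * C_D ^ (2:ℕ) = M₀ * r ^ (-q) := by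
            rw [hM₀def]; ring
          rw [hre, ENNReal.ofReal_mul hM₀0.le, mul_assoc]
  -- iteration step
  have hstep : ∀ m : ℕ, 3 ≤ m → A (m + p) ≤ ENNReal.ofReal θ * A m := by
    intro m hm
    obtain ⟨u, hcnt, huE, huB, hdisj, hest⟩ :=
      aik_cover μ E q C₁ C_D hq hC₁0.le hCD hvol hdbl x (ρ (m+1)) (R (m+1))
        (hρpos (m+1)) (hRpos (m+1)) (hA4 (m+1) (by omega))
    have hcu : Countable u := hcnt.to_subtype
    have hρm : 0 < ρ (m+1) := hρpos (m+1)
    obtain ⟨Ann, hAnndef⟩ : ∃ _x : Set X, _x = closedBall x (R m) ∩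
        {y | ENNReal.ofReal (ρ (m+1+s)) ≤ EMetric.infEdist y E ∧
             EMetric.infEdist y E ≤ ENNReal.ofReal (ρ (m+1))} := ⟨_, rfl⟩
    have hτρ : τ * ρ (m+1) = ρ (m+1+s) := by
      simp only [hρdef, hτdef]
      rw [pow_add]
      ring
    obtain ⟨G, hGdef⟩ : ∃ _x : X → Set X, _x = fun z => closedBall z (ρ (m+1)) ∩
        {y | ENNReal.ofReal (ρ (m+1+s)) ≤ EMetric.infEdist y E} := ⟨_, rfl⟩
    have hGmeas : ∀ z, MeasurableSet (G z) := by
      intro z; rw [hGdef]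
      exact measurableSet_closedBall.inter (measurableSet_le measurable_const hdmeas)
    -- Chebyshev: at least half of each ball is far from E
    have hcheb : ∀ z ∈ E, μ (closedBall z (ρ (m+1))) ≤ 2 * μ (G z) := by
      intro z hz
      have hball := hA₁ z hz (ρ (m+1)) hρm (hρle (m+1))
      obtain ⟨bad, hbaddef⟩ : ∃ _x : Set X, _x = closedBall z (ρ (m+1)) ∩
          {y | EMetric.infEdist y E < ENNReal.ofReal (ρ (m+1+s))} := ⟨_, rfl⟩
      have hbad : μ bad ≤ ENNReal.ofReal 2⁻¹ * μ (closedBall z (ρ (m+1))) := by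
        have hlow : ENNReal.ofReal (ρ (m+1+s)) ^ (-q) * μ bad ≤
            ∫⁻ y in closedBall z (ρ (m+1)), (EMetric.infEdist y E) ^ (-q) ∂μ := by
          have h1 : ENNReal.ofReal (ρ (m+1+s)) ^ (-q) * μ bad =
              ∫⁻ _ in bad, ENNReal.ofReal (ρ (m+1+s)) ^ (-q) ∂μ := (setLIntegral_const _ _).symm
          rw [h1]
          refine le_trans (setLIntegral_mono hgq ?_) (lintegral_mono_set ?_)
          · intro y hy
            rw [hbaddef] at hy
            exact aik_rpow_anti hy.2.le hq.le
          · rw [hbaddef]; exact Set.inter_subset_left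
        have h2 := aik_cancel (hρpos (m+1+s)) q (hlow.trans hball)
        have hsc : ρ (m+1+s) ^ q * (C₁ * ρ (m+1) ^ (-q)) ≤ 2⁻¹ := by
          rw [← hτρ, Real.mul_rpow hτ0.le hρm.le]
          have hbb : ρ (m+1) ^ q * ρ (m+1) ^ (-q) = 1 := by
            rw [← Real.rpow_add hρm]; simp
          calc τ ^ q * ρ (m+1) ^ q * (C₁ * ρ (m+1) ^ (-q))
              = C₁ * τ ^ q * (ρ (m+1) ^ q * ρ (m+1) ^ (-q)) := by ring
            _ = C₁ * τ ^ q := by rw [hbb, mul_one]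
            _ ≤ 2⁻¹ := by linarith [hτq]
        refine h2.trans ?_
        calc ENNReal.ofReal (ρ (m+1+s) ^ q) *
              (ENNReal.ofReal C₁ * ENNReal.ofReal (ρ (m+1) ^ (-q)) * μ (closedBall z (ρ (m+1))))
            = ENNReal.ofReal (ρ (m+1+s) ^ q * (C₁ * ρ (m+1) ^ (-q))) *
                μ (closedBall z (ρ (m+1))) := by
              rw [ENNReal.ofReal_mul (Real.rpow_nonneg (hρpos (m+1+s)).le q),
                ENNReal.ofReal_mul hC₁0.le]
              ring
          _ ≤ ENNReal.ofReal 2⁻¹ * μ (closedBall z (ρ (m+1))) :=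
              mul_le_mul_left (ENNReal.ofReal_le_ofReal hsc) _
      have hcover2 : closedBall z (ρ (m+1)) ⊆ G z ∪ bad := by
        intro y hy
        by_cases h : ENNReal.ofReal (ρ (m+1+s)) ≤ EMetric.infEdist y E
        · left; rw [hGdef]; exact ⟨hy, h⟩
        · right; rw [hbaddef]; exact ⟨hy, not_le.mp h⟩
      have h3 : μ (closedBall z (ρ (m+1))) ≤
          μ (G z) + ENNReal.ofReal 2⁻¹ * μ (closedBall z (ρ (m+1))) :=
        (measure_mono hcover2).trans ((measure_union_le _ _).trans (add_le_add le_rfl hbad))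
      have h21 : (2:ℝ≥0∞) * ENNReal.ofReal 2⁻¹ = 1 := by
        rw [show (2:ℝ≥0∞) = ENNReal.ofReal 2 by simp, ← ENNReal.ofReal_mul (by norm_num)]
        norm_num
      have hfin : μ (closedBall z (ρ (m+1))) ≠ ⊤ := ne_of_lt (hvol z _ hρm).2
      have h5 : μ (closedBall z (ρ (m+1))) + μ (closedBall z (ρ (m+1))) ≤
          μ (closedBall z (ρ (m+1))) + 2 * μ (G z) := by
        calc μ (closedBall z (ρ (m+1))) + μ (closedBall z (ρ (m+1)))
            ≤ (μ (G z) + ENNReal.ofReal 2⁻¹ * μ (closedBall z (ρ (m+1)))) +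
              (μ (G z) + ENNReal.ofReal 2⁻¹ * μ (closedBall z (ρ (m+1)))) := add_le_add h3 h3
          _ = (2 * ENNReal.ofReal 2⁻¹) * μ (closedBall z (ρ (m+1))) + 2 * μ (G z) := by ring
          _ = μ (closedBall z (ρ (m+1))) + 2 * μ (G z) := by rw [h21, one_mul]
      exact (ENNReal.add_le_add_iff_left hfin).mp h5
    -- the far part is controlled by the integral over it
    have hGest : ∀ z ∈ E, μ (G z) ≤ ENNReal.ofReal (ρ (m+1) ^ q) *
        ∫⁻ y in G z, (EMetric.infEdist y E) ^ (-q) ∂μ := by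
      intro z hz
      refine aik_cancel hρm q ?_
      have h1 : ENNReal.ofReal (ρ (m+1)) ^ (-q) * μ (G z) =
          ∫⁻ _ in G z, ENNReal.ofReal (ρ (m+1)) ^ (-q) ∂μ := (setLIntegral_const _ _).symm
      rw [h1]
      refine setLIntegral_mono hgq ?_
      intro y hy
      rw [hGdef] at hy
      have hyz : EMetric.infEdist y E ≤ ENNReal.ofReal (ρ (m+1)) := by
        refine le_trans (EMetric.infEdist_le_edist_of_mem hz) ?_
        rw [edist_dist]
        exact ENNReal.ofReal_le_ofReal (mem_closedBall.mp hy.1)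
      exact aik_rpow_anti hyz hq.le
    -- G z sits inside the annulus
    have hGAnn : ∀ z ∈ u, G z ⊆ Ann := by
      intro z hzu y hy
      rw [hGdef] at hy; rw [hAnndef]
      have hz := huB z hzu
      rw [mem_closedBall] at hz
      have hy1 := mem_closedBall.mp hy.1
      refine ⟨?_, hy.2, ?_⟩
      · rw [mem_closedBall]
        have htri := dist_triangle y z x
        have hRm : R m = 2 * r + 8 * ρ m := by simp only [hRdef]
        have hRm1 : R (m+1) = 2 * r + 8 * ρ (m+1) := by simp only [hRdef]
        have hhalf := hρhalf m
        have hρm1 := hρpos (m+1)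
        linarith
      · refine le_trans (EMetric.infEdist_le_edist_of_mem (huE hzu)) ?_
        rw [edist_dist]
        exact ENNReal.ofReal_le_ofReal hy1
    have hGd : Pairwise (Function.onFun Disjoint fun z : u => G (z : X)) := by
      intro z w hzw
      refine Disjoint.mono ?_ ?_ (hdisj z.2 w.2 (fun h => hzw (Subtype.ext h)))
      · rw [hGdef]; exact Set.inter_subset_left
      · rw [hGdef]; exact Set.inter_subset_left
    have hsumG : ∑' z : u, ∫⁻ y in G (z : X), (EMetric.infEdist y E) ^ (-q) ∂μ ≤
        ∫⁻ y in Ann, (EMetric.infEdist y E) ^ (-q) ∂μ := by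
      rw [← lintegral_iUnion (fun z : u => hGmeas _) hGd]
      exact lintegral_mono_set (Set.iUnion_subset fun z => hGAnn z z.2)
    -- main estimate : A (m+1) ≤ K ∫_Ann
    have hAm1 : A (m+1) ≤ ENNReal.ofReal K *
        ∫⁻ y in Ann, (EMetric.infEdist y E) ^ (-q) ∂μ := by
      have hbb' : ρ (m+1) ^ (-q) * ρ (m+1) ^ q = 1 := by
        rw [← Real.rpow_add hρm]; simp
      calc A (m+1) ≤ ENNReal.ofReal (C₁ * C_D ^ (2:ℕ)) * ENNReal.ofReal (ρ (m+1) ^ (-q)) *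
            ∑' z : u, μ (closedBall (z : X) (ρ (m+1))) := by
            simp only [hAdef, hSdef]; exact hest
        _ ≤ ENNReal.ofReal (C₁ * C_D ^ (2:ℕ)) * ENNReal.ofReal (ρ (m+1) ^ (-q)) *
            ∑' z : u, (2 * (ENNReal.ofReal (ρ (m+1) ^ q) *
              ∫⁻ y in G (z : X), (EMetric.infEdist y E) ^ (-q) ∂μ)) := by
            refine mul_le_mul_right (ENNReal.tsum_le_tsum fun z => ?_) _
            exact (hcheb (z : X) (huE z.2)).trans
              (mul_le_mul_right (hGest (z : X) (huE z.2)) 2)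
        _ = ENNReal.ofReal (C₁ * C_D ^ (2:ℕ)) * ENNReal.ofReal (ρ (m+1) ^ (-q)) *
            (2 * (ENNReal.ofReal (ρ (m+1) ^ q) *
              ∑' z : u, ∫⁻ y in G (z : X), (EMetric.infEdist y E) ^ (-q) ∂μ)) := by
            rw [ENNReal.tsum_mul_left, ENNReal.tsum_mul_left]
        _ ≤ ENNReal.ofReal (C₁ * C_D ^ (2:ℕ)) * ENNReal.ofReal (ρ (m+1) ^ (-q)) *
            (2 * (ENNReal.ofReal (ρ (m+1) ^ q) *
              ∫⁻ y in Ann, (EMetric.infEdist y E) ^ (-q) ∂μ)) :=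
            mul_le_mul_right (mul_le_mul_right (mul_le_mul_right hsumG _) _) _
        _ = (2:ℝ≥0∞) * ENNReal.ofReal (C₁ * C_D ^ (2:ℕ)) *
            (ENNReal.ofReal (ρ (m+1) ^ (-q)) * ENNReal.ofReal (ρ (m+1) ^ q)) *
            ∫⁻ y in Ann, (EMetric.infEdist y E) ^ (-q) ∂μ := by ring
        _ = ENNReal.ofReal K * ∫⁻ y in Ann, (EMetric.infEdist y E) ^ (-q) ∂μ := by
            rw [← ENNReal.ofReal_mul (by positivity : (0:ℝ) ≤ ρ (m+1) ^ (-q)), hbb',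
              ENNReal.ofReal_one, mul_one, hKdef]
            congr 1
            rw [show (2:ℝ) * C₁ * C_D ^ (2:ℕ) = 2 * (C₁ * C_D ^ (2:ℕ)) by ring,
              ENNReal.ofReal_mul (by norm_num : (0:ℝ) ≤ 2)]
            simp
    -- hole filling
    have hIA : (∫⁻ y in Ann, (EMetric.infEdist y E) ^ (-q) ∂μ) + A (m+1+s) ≤ A m := by
      have hdisj2 : Disjoint Ann (S (m+1+s)) := by
        rw [Set.disjoint_left]
        intro y hy hy2
        rw [hAnndef] at hy
        have h1 : EMetric.infEdist y E < ENNReal.ofReal (ρ (m+1+s)) := by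
          have := hSanti (m+1+s) (m+1+s) le_rfl hy2
          simp only [hSdef] at hy2
          exact hy2.2
        exact absurd hy.2.1 (not_le.mpr h1)
      have hsub : Ann ∪ S (m+1+s) ⊆ S m := by
        rintro y (hy | hy)
        · rw [hAnndef] at hy
          simp only [hSdef]
          refine ⟨hy.1, ?_⟩
          refine lt_of_le_of_lt hy.2.2 ?_
          rw [ENNReal.ofReal_lt_ofReal_iff (hρpos m)]
          have := hρhalf m
          have := hρpos (m+1)
          linarith
        · exact hSanti m (m+1+s) (by omega) hy
      calc (∫⁻ y in Ann, (EMetric.infEdist y E) ^ (-q) ∂μ) + A (m+1+s)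
          = ∫⁻ y in Ann ∪ S (m+1+s), (EMetric.infEdist y E) ^ (-q) ∂μ := by
            simp only [hAdef]
            exact (lintegral_union (hSmeas _) hdisj2).symm
        _ ≤ A m := by
            simp only [hAdef]
            exact lintegral_mono_set hsub
    have h1 : A (m+1+s) ≤ ENNReal.ofReal K *
        ∫⁻ y in Ann, (EMetric.infEdist y E) ^ (-q) ∂μ :=
      (hAanti (m+1) (m+1+s) (by omega)).trans hAm1
    have h2 : A (m+1+s) * (1 + ENNReal.ofReal K) ≤ ENNReal.ofReal K * A m := by
      calc A (m+1+s) * (1 + ENNReal.ofReal K)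
          = A (m+1+s) + ENNReal.ofReal K * A (m+1+s) := by ring
        _ ≤ (ENNReal.ofReal K * ∫⁻ y in Ann, (EMetric.infEdist y E) ^ (-q) ∂μ) +
            ENNReal.ofReal K * A (m+1+s) := add_le_add_left h1 _
        _ = ENNReal.ofReal K *
            ((∫⁻ y in Ann, (EMetric.infEdist y E) ^ (-q) ∂μ) + A (m+1+s)) := by ring
        _ ≤ ENNReal.ofReal K * A m := mul_le_mul_right hIA _
    have hbne : (1:ℝ≥0∞) + ENNReal.ofReal K ≠ 0 :=
      ne_of_gt (lt_of_lt_of_le zero_lt_one le_self_add)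
    have hbnt : (1:ℝ≥0∞) + ENNReal.ofReal K ≠ ⊤ :=
      ENNReal.add_ne_top.mpr ⟨ENNReal.one_ne_top, ENNReal.ofReal_ne_top⟩
    have h3 : A (m+1+s) ≤ ENNReal.ofReal K * A m / (1 + ENNReal.ofReal K) :=
      (ENNReal.le_div_iff_mul_le (Or.inl hbne) (Or.inl hbnt)).mpr h2
    have h4 : ENNReal.ofReal K * A m / (1 + ENNReal.ofReal K) = ENNReal.ofReal θ * A m := by
      have h5 : (1:ℝ≥0∞) + ENNReal.ofReal K = ENNReal.ofReal (K + 1) := by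
        rw [ENNReal.ofReal_add (by linarith : (0:ℝ) ≤ K) (by norm_num : (0:ℝ) ≤ 1)]
        simp [add_comm]
      rw [h5, hθdef, ENNReal.ofReal_div_of_pos (by linarith : (0:ℝ) < K + 1),
        div_eq_mul_inv, div_eq_mul_inv]
      ring
    have hmp : m + p = m + 1 + s := by rw [hpdef]; omega
    rw [hmp]
    exact h3.trans_eq h4
  -- geometric decay
  have hdecay : ∀ n : ℕ, A (3 + n * p) ≤ (ENNReal.ofReal θ) ^ n * A 3 := by
    intro n
    induction n with
    | zero => simp
    | succ n ih =>
      have h1 : 3 + (n + 1) * p = (3 + n * p) + p := by ring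
      calc A (3 + (n + 1) * p) = A ((3 + n * p) + p) := by rw [h1]
        _ ≤ ENNReal.ofReal θ * A (3 + n * p) := hstep (3 + n * p) (by omega)
        _ ≤ ENNReal.ofReal θ * ((ENNReal.ofReal θ) ^ n * A 3) := mul_le_mul_right ih _
        _ = (ENNReal.ofReal θ) ^ (n + 1) * A 3 := by ring
  -- final assembly
  have hμB : μ (closedBall x r) < ⊤ := (hvol x r hr).2
  -- the zero set is null
  obtain ⟨N, hNdef⟩ : ∃ _x : Set X,
      _x = closedBall x r ∩ {y | EMetric.infEdist y E = 0} := ⟨_, rfl⟩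
  have hNmeas : MeasurableSet N := by
    rw [hNdef]
    exact measurableSet_closedBall.inter (hdmeas (measurableSet_singleton 0))
  have hN : μ N = 0 := by
    by_contra hN0
    have h1 : ∫⁻ y in N, (EMetric.infEdist y E) ^ (-q) ∂μ = ⊤ := by
      have h2 : ∫⁻ y in N, (EMetric.infEdist y E) ^ (-q) ∂μ = ∫⁻ _ in N, (⊤:ℝ≥0∞) ∂μ := by
        refine setLIntegral_congr_fun hNmeas ?_
        intro y hy
        rw [hNdef] at hy
        show EMetric.infEdist y E ^ (-q) = ⊤
        rw [hy.2, ENNReal.zero_rpow_of_neg (by linarith)]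
      rw [h2, setLIntegral_const, ENNReal.top_mul hN0]
    have h3 : ∫⁻ y in N, (EMetric.infEdist y E) ^ (-q) ∂μ ≤
        ENNReal.ofReal C₁ * ENNReal.ofReal (r ^ (-q)) * μ (closedBall x r) := by
      refine le_trans (lintegral_mono_set ?_) (hA₁ x hx r hr le_rfl)
      rw [hNdef]; exact Set.inter_subset_left
    rw [h1] at h3
    have h4 : ENNReal.ofReal C₁ * ENNReal.ofReal (r ^ (-q)) * μ (closedBall x r) ≠ ⊤ :=
      ENNReal.mul_ne_top (ENNReal.mul_ne_top ENNReal.ofReal_ne_top ENNReal.ofReal_ne_top)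
        (ne_of_lt hμB)
    exact h4 (top_le_iff.mp h3)
  -- the outer region and the annular blocks
  obtain ⟨T, hTdef⟩ : ∃ _x : Set X,
      _x = closedBall x r ∩ {y | ENNReal.ofReal (ρ 3) ≤ EMetric.infEdist y E} := ⟨_, rfl⟩
  obtain ⟨W, hWdef⟩ : ∃ _x : ℕ → Set X, _x = fun n => closedBall x r ∩
      {y | ENNReal.ofReal (ρ (3 + (n+1) * p)) ≤ EMetric.infEdist y E ∧
           EMetric.infEdist y E < ENNReal.ofReal (ρ (3 + n * p))} := ⟨_, rfl⟩
  have hcoverB : closedBall x r ⊆ (T ∪ ⋃ n, W n) ∪ N := by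
    intro y hy
    by_cases h0 : EMetric.infEdist y E = 0
    · right; rw [hNdef]; exact ⟨hy, h0⟩
    left
    by_cases h3 : ENNReal.ofReal (ρ 3) ≤ EMetric.infEdist y E
    · left; rw [hTdef]; exact ⟨hy, h3⟩
    right
    have hdy_top : EMetric.infEdist y E ≠ ⊤ := by
      refine ne_of_lt (lt_of_le_of_lt (EMetric.infEdist_le_edist_of_mem hx) ?_)
      rw [edist_dist]; exact ENNReal.ofReal_lt_top
    have hdy0 : 0 < (EMetric.infEdist y E).toReal := ENNReal.toReal_pos h0 hdy_top
    obtain ⟨k, hk⟩ : ∃ k : ℕ, (2:ℝ)⁻¹ ^ k < (EMetric.infEdist y E).toReal / r :=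
      exists_pow_lt_of_lt_one (by positivity) (by norm_num)
    have hex : ∃ n : ℕ, ENNReal.ofReal (ρ (3 + n * p)) ≤ EMetric.infEdist y E := by
      refine ⟨k, ?_⟩
      have h1 : ρ (3 + k * p) ≤ (2:ℝ)⁻¹ ^ k * r := by
        simp only [hρdef]
        have h2 : (2:ℝ)⁻¹ ^ (3 + k * p) ≤ (2:ℝ)⁻¹ ^ k := by
          refine pow_le_pow_of_le_one (by norm_num) (by norm_num) ?_
          have : 1 ≤ p := hp0
          calc k = k * 1 := (mul_one k).symm
            _ ≤ k * p := Nat.mul_le_mul_left k this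
            _ ≤ 3 + k * p := by omega
        exact mul_le_mul_of_nonneg_right h2 hr.le
      have h2 : (2:ℝ)⁻¹ ^ k * r < (EMetric.infEdist y E).toReal := by
        rw [div_eq_mul_inv] at hk
        calc (2:ℝ)⁻¹ ^ k * r < ((EMetric.infEdist y E).toReal * r⁻¹) * r :=
            mul_lt_mul_of_pos_right hk hr
          _ = (EMetric.infEdist y E).toReal := by field_simp
      calc ENNReal.ofReal (ρ (3 + k * p))
          ≤ ENNReal.ofReal ((EMetric.infEdist y E).toReal) :=
            ENNReal.ofReal_le_ofReal (by linarith)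
        _ = EMetric.infEdist y E := ENNReal.ofReal_toReal hdy_top
    have hn0 : Nat.find hex ≠ 0 := by
      intro hzero
      have hsp := Nat.find_spec hex
      rw [hzero] at hsp
      simp only [Nat.zero_mul, Nat.add_zero] at hsp
      exact h3 hsp
    refine Set.mem_iUnion.mpr ⟨Nat.find hex - 1, ?_⟩
    rw [hWdef]
    refine ⟨hy, ?_, ?_⟩
    · have heq : Nat.find hex - 1 + 1 = Nat.find hex := Nat.succ_pred_eq_of_ne_zero hn0
      rw [heq]
      exact Nat.find_spec hex
    · exact not_le.mp (Nat.find_min hex (Nat.pred_lt hn0))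
  -- splitting the integral
  have hsplit : ∫⁻ y in closedBall x r, (EMetric.infEdist y E) ^ (-(q+δ)) ∂μ ≤
      (∫⁻ y in T, (EMetric.infEdist y E) ^ (-(q+δ)) ∂μ) +
      ∑' n, ∫⁻ y in W n, (EMetric.infEdist y E) ^ (-(q+δ)) ∂μ := by
    calc ∫⁻ y in closedBall x r, (EMetric.infEdist y E) ^ (-(q+δ)) ∂μ
        ≤ ∫⁻ y in (T ∪ ⋃ n, W n) ∪ N, (EMetric.infEdist y E) ^ (-(q+δ)) ∂μ :=
          lintegral_mono_set hcoverB
      _ ≤ (∫⁻ y in T ∪ ⋃ n, W n, (EMetric.infEdist y E) ^ (-(q+δ)) ∂μ) +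
          ∫⁻ y in N, (EMetric.infEdist y E) ^ (-(q+δ)) ∂μ := lintegral_union_le _ _ _
      _ = ∫⁻ y in T ∪ ⋃ n, W n, (EMetric.infEdist y E) ^ (-(q+δ)) ∂μ := by
          rw [setLIntegral_measure_zero _ _ hN, add_zero]
      _ ≤ (∫⁻ y in T, (EMetric.infEdist y E) ^ (-(q+δ)) ∂μ) +
          ∫⁻ y in ⋃ n, W n, (EMetric.infEdist y E) ^ (-(q+δ)) ∂μ := lintegral_union_le _ _ _
      _ ≤ (∫⁻ y in T, (EMetric.infEdist y E) ^ (-(q+δ)) ∂μ) +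
          ∑' n, ∫⁻ y in W n, (EMetric.infEdist y E) ^ (-(q+δ)) ∂μ :=
          add_le_add le_rfl (lintegral_iUnion_le _ _)
  have hρ3 : ρ 3 = (8:ℝ)⁻¹ * r := by simp only [hρdef]; norm_num
  -- the outer region
  have hT : ∫⁻ y in T, (EMetric.infEdist y E) ^ (-(q+δ)) ∂μ ≤
      ENNReal.ofReal (8 ^ (q+1)) * (ENNReal.ofReal (r ^ (-(q+δ))) * μ (closedBall x r)) := by
    have h1 : ∀ y ∈ T, (EMetric.infEdist y E) ^ (-(q+δ)) ≤
        ENNReal.ofReal (ρ 3 ^ (-(q+δ))) := by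
      intro y hy
      rw [hTdef] at hy
      rw [← ENNReal.ofReal_rpow_of_pos (hρpos 3)]
      exact aik_rpow_anti hy.2 (by linarith)
    have h2 : ρ 3 ^ (-(q+δ)) ≤ 8 ^ (q+1) * r ^ (-(q+δ)) := by
      rw [hρ3, Real.mul_rpow (by norm_num) hr.le,
        Real.inv_rpow (by norm_num : (0:ℝ) ≤ 8), Real.rpow_neg (by norm_num : (0:ℝ) ≤ 8),
        inv_inv]
      have h3 : (8:ℝ) ^ (q+δ) ≤ 8 ^ (q+1) :=
        Real.rpow_le_rpow_of_exponent_le (by norm_num) (by linarith)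
      have h4 : (0:ℝ) ≤ r ^ (-(q+δ)) := Real.rpow_nonneg hr.le _
      exact mul_le_mul_of_nonneg_right h3 h4
    calc ∫⁻ y in T, (EMetric.infEdist y E) ^ (-(q+δ)) ∂μ
        ≤ ∫⁻ _ in T, ENNReal.ofReal (ρ 3 ^ (-(q+δ))) ∂μ :=
          setLIntegral_mono measurable_const h1
      _ = ENNReal.ofReal (ρ 3 ^ (-(q+δ))) * μ T := setLIntegral_const _ _
      _ ≤ ENNReal.ofReal (8 ^ (q+1) * r ^ (-(q+δ))) * μ (closedBall x r) :=
          mul_le_mul' (ENNReal.ofReal_le_ofReal h2)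
            (measure_mono (by rw [hTdef]; exact Set.inter_subset_left))
      _ = ENNReal.ofReal (8 ^ (q+1)) * (ENNReal.ofReal (r ^ (-(q+δ))) * μ (closedBall x r)) := by
          rw [ENNReal.ofReal_mul (by positivity : (0:ℝ) ≤ (8:ℝ) ^ (q+1)), mul_assoc]
  -- each annular block
  have hWn : ∀ n : ℕ, ∫⁻ y in W n, (EMetric.infEdist y E) ^ (-(q+δ)) ∂μ ≤
      ENNReal.ofReal (2 ^ ((3 + (p:ℝ)) * δ)) * ENNReal.ofReal ν ^ n *
        (ENNReal.ofReal M₀ * (ENNReal.ofReal (r ^ (-(q+δ))) * μ (closedBall x r))) := by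
    intro n
    have hpt : ∀ y ∈ W n, (EMetric.infEdist y E) ^ (-(q+δ)) ≤
        ENNReal.ofReal (ρ (3+(n+1)*p) ^ (-δ)) * (EMetric.infEdist y E) ^ (-q) := by
      intro y hy
      rw [hWdef] at hy
      have hd0 : EMetric.infEdist y E ≠ 0 := by
        intro h
        have h21 := hy.2.1
        rw [h] at h21
        have := lt_of_lt_of_le (ENNReal.ofReal_pos.mpr (hρpos (3+(n+1)*p))) h21
        exact absurd this (lt_irrefl 0)
      have hdt : EMetric.infEdist y E ≠ ⊤ := by
        refine ne_of_lt (lt_of_le_of_lt (EMetric.infEdist_le_edist_of_mem hx) ?_)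
        rw [edist_dist]; exact ENNReal.ofReal_lt_top
      have heq : (EMetric.infEdist y E) ^ (-(q+δ)) =
          (EMetric.infEdist y E) ^ (-δ) * (EMetric.infEdist y E) ^ (-q) := by
        rw [← ENNReal.rpow_add _ _ hd0 hdt]
        ring_nf
      rw [heq]
      refine mul_le_mul_left ?_ _
      rw [← ENNReal.ofReal_rpow_of_pos (hρpos (3+(n+1)*p))]
      exact aik_rpow_anti hy.2.1 hδ0.le
    have hWS : W n ⊆ S (3 + n * p) := by
      intro y hy
      rw [hWdef] at hy
      simp only [hSdef]
      exact ⟨closedBall_subset_closedBall (hrR _) hy.1, hy.2.2⟩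
    have hρδ : ρ (3+(n+1)*p) ^ (-δ) =
        2 ^ ((3 + (p:ℝ)) * δ) * (2 ^ ((p:ℝ) * δ)) ^ n * r ^ (-δ) := by
      simp only [hρdef]
      rw [Real.mul_rpow (by positivity) hr.le]
      congr 1
      have h2k : ((2:ℝ)⁻¹) ^ (3+(n+1)*p) = (2:ℝ) ^ (-((3+(n+1)*p : ℕ):ℝ)) := by
        rw [inv_pow, ← Real.rpow_natCast (2:ℝ) (3+(n+1)*p),
          ← Real.rpow_neg (by norm_num : (0:ℝ) ≤ 2)]
      rw [h2k, ← Real.rpow_mul (by norm_num : (0:ℝ) ≤ 2)]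
      have hc : (-((3+(n+1)*p : ℕ):ℝ)) * (-δ) = (3 + (p:ℝ)) * δ + (n:ℝ) * ((p:ℝ) * δ) := by
        push_cast
        ring
      rw [hc, Real.rpow_add (by norm_num : (0:ℝ) < 2)]
      congr 1
      rw [mul_comm ((n:ℝ)) ((p:ℝ) * δ), Real.rpow_mul (by norm_num : (0:ℝ) ≤ 2),
        Real.rpow_natCast]
    have hb0 : (0:ℝ) ≤ 2 ^ ((p:ℝ) * δ) := Real.rpow_nonneg (by norm_num) _
    have ha0 : (0:ℝ) ≤ 2 ^ ((3 + (p:ℝ)) * δ) := Real.rpow_nonneg (by norm_num) _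
    calc ∫⁻ y in W n, (EMetric.infEdist y E) ^ (-(q+δ)) ∂μ
        ≤ ∫⁻ y in W n, ENNReal.ofReal (ρ (3+(n+1)*p) ^ (-δ)) *
            (EMetric.infEdist y E) ^ (-q) ∂μ :=
          setLIntegral_mono (measurable_const.mul hgq) hpt
      _ = ENNReal.ofReal (ρ (3+(n+1)*p) ^ (-δ)) *
            ∫⁻ y in W n, (EMetric.infEdist y E) ^ (-q) ∂μ := lintegral_const_mul _ hgq
      _ ≤ ENNReal.ofReal (ρ (3+(n+1)*p) ^ (-δ)) * A (3 + n * p) := by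
          refine mul_le_mul_right ?_ _
          simp only [hAdef]
          exact lintegral_mono_set hWS
      _ ≤ ENNReal.ofReal (ρ (3+(n+1)*p) ^ (-δ)) * ((ENNReal.ofReal θ) ^ n *
            (ENNReal.ofReal M₀ * (ENNReal.ofReal (r ^ (-q)) * μ (closedBall x r)))) :=
          mul_le_mul_right ((hdecay n).trans (mul_le_mul_right hbase _)) _
      _ = ENNReal.ofReal (2 ^ ((3 + (p:ℝ)) * δ)) * ENNReal.ofReal ν ^ n *
            (ENNReal.ofReal M₀ * (ENNReal.ofReal (r ^ (-(q+δ))) * μ (closedBall x r))) := by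
          rw [hρδ]
          rw [ENNReal.ofReal_mul (mul_nonneg ha0 (pow_nonneg hb0 n)),
            ENNReal.ofReal_mul ha0, ENNReal.ofReal_pow hb0]
          have e2 : ENNReal.ofReal (r ^ (-δ)) * ENNReal.ofReal (r ^ (-q)) =
              ENNReal.ofReal (r ^ (-(q+δ))) := by
            rw [← ENNReal.ofReal_mul (Real.rpow_nonneg hr.le _), ← Real.rpow_add hr]
            congr 2
            ring
          have e3 : (ENNReal.ofReal (2 ^ ((p:ℝ) * δ))) ^ n * (ENNReal.ofReal θ) ^ n =
              (ENNReal.ofReal ν) ^ n := by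
            rw [← mul_pow, ← ENNReal.ofReal_mul hb0, ← hνdef]
          calc ENNReal.ofReal (2 ^ ((3 + (p:ℝ)) * δ)) * (ENNReal.ofReal (2 ^ ((p:ℝ) * δ))) ^ n *
                ENNReal.ofReal (r ^ (-δ)) * ((ENNReal.ofReal θ) ^ n *
                (ENNReal.ofReal M₀ * (ENNReal.ofReal (r ^ (-q)) * μ (closedBall x r))))
              = ENNReal.ofReal (2 ^ ((3 + (p:ℝ)) * δ)) *
                ((ENNReal.ofReal (2 ^ ((p:ℝ) * δ))) ^ n * (ENNReal.ofReal θ) ^ n) *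
                (ENNReal.ofReal M₀ * ((ENNReal.ofReal (r ^ (-δ)) * ENNReal.ofReal (r ^ (-q))) *
                  μ (closedBall x r))) := by ring
            _ = ENNReal.ofReal (2 ^ ((3 + (p:ℝ)) * δ)) * ENNReal.ofReal ν ^ n *
                (ENNReal.ofReal M₀ * (ENNReal.ofReal (r ^ (-(q+δ))) * μ (closedBall x r))) := by
                rw [e3, e2]
  -- summing the blocks
  have hgeo : ∑' n : ℕ, (ENNReal.ofReal ν) ^ n = ENNReal.ofReal ((1 - ν)⁻¹) := by
    rw [ENNReal.tsum_geometric]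
    have h1 : (1:ℝ≥0∞) - ENNReal.ofReal ν = ENNReal.ofReal (1 - ν) := by
      rw [ENNReal.ofReal_sub _ hν0.le, ENNReal.ofReal_one]
    rw [h1, ← ENNReal.ofReal_inv_of_pos (by linarith : (0:ℝ) < 1 - ν)]
  have hWsum : ∑' n, ∫⁻ y in W n, (EMetric.infEdist y E) ^ (-(q+δ)) ∂μ ≤
      ENNReal.ofReal (2 ^ ((3 + (p:ℝ)) * δ) * M₀ * (1 - ν)⁻¹) *
        (ENNReal.ofReal (r ^ (-(q+δ))) * μ (closedBall x r)) := by
    have ha0 : (0:ℝ) ≤ 2 ^ ((3 + (p:ℝ)) * δ) := Real.rpow_nonneg (by norm_num) _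
    calc ∑' n, ∫⁻ y in W n, (EMetric.infEdist y E) ^ (-(q+δ)) ∂μ
        ≤ ∑' n : ℕ, (ENNReal.ofReal (2 ^ ((3 + (p:ℝ)) * δ)) * ENNReal.ofReal ν ^ n *
            (ENNReal.ofReal M₀ * (ENNReal.ofReal (r ^ (-(q+δ))) * μ (closedBall x r)))) :=
          ENNReal.tsum_le_tsum hWn
      _ = ENNReal.ofReal (2 ^ ((3 + (p:ℝ)) * δ)) *
            (ENNReal.ofReal M₀ * (ENNReal.ofReal (r ^ (-(q+δ))) * μ (closedBall x r))) *
            ∑' n : ℕ, (ENNReal.ofReal ν) ^ n := by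
          rw [← ENNReal.tsum_mul_left]
          congr 1
          ext n
          ring
      _ = ENNReal.ofReal (2 ^ ((3 + (p:ℝ)) * δ) * M₀ * (1 - ν)⁻¹) *
            (ENNReal.ofReal (r ^ (-(q+δ))) * μ (closedBall x r)) := by
          rw [hgeo]
          rw [ENNReal.ofReal_mul (mul_nonneg ha0 hM₀0.le), ENNReal.ofReal_mul ha0]
          ring
  -- conclusion
  calc ∫⁻ y in closedBall x r, (EMetric.infEdist y E) ^ (-(q + δ)) ∂μ
      ≤ (∫⁻ y in T, (EMetric.infEdist y E) ^ (-(q+δ)) ∂μ) +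
        ∑' n, ∫⁻ y in W n, (EMetric.infEdist y E) ^ (-(q+δ)) ∂μ := hsplit
    _ ≤ ENNReal.ofReal (8 ^ (q+1)) * (ENNReal.ofReal (r ^ (-(q+δ))) * μ (closedBall x r)) +
        ENNReal.ofReal (2 ^ ((3 + (p:ℝ)) * δ) * M₀ * (1 - ν)⁻¹) *
          (ENNReal.ofReal (r ^ (-(q+δ))) * μ (closedBall x r)) := add_le_add hT hWsum
    _ = ENNReal.ofReal C * (ENNReal.ofReal (r ^ (-(q+δ))) * μ (closedBall x r)) := by
        rw [hCdef, ENNReal.ofReal_add (by positivity : (0:ℝ) ≤ (8:ℝ) ^ (q+1))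
          (mul_nonneg (mul_nonneg (Real.rpow_nonneg (by norm_num) _) hM₀0.le)
            (inv_nonneg.mpr (by linarith : (0:ℝ) ≤ 1 - ν)))]
        ring
    _ = ENNReal.ofReal (C * r ^ (-(q + δ))) * μ (closedBall x r) := by
        rw [ENNReal.ofReal_mul hC0.le, mul_assoc]
end

section
/- Let (X,d) be a complete metric space and μ a Borel measure on X with 0 < μ(B(x,r)) < ∞ for every closed ball B(x,r), which is globally doubling: there is C_D ≥ 1 with μ(B(x,2r)) ≤ C_D μ(B(x,r)) for all x ∈ X and r > 0. Let E ⊆ X be a closed set and q > 0, and assume that the upper Assouad codimension of E is less than q, i.e. there exist 0 ≤ s < q and c₀ > 0 such that μ(E_r ∩ B(x,R)) ≥ c₀ (r/R)^s μ(B(x,R)) for every x ∈ E and all 0 < r < R < diam(E). Then there exists a constant C > 0 such that for every w ∈ E, every 0 < R < diam(E), and every countable family of closed balls B(z_i, r_i) with 0 < r_i ≤ R whose union covers E ∩ B(w,R), one has ∑_i r_i^{−q} μ(B(z_i,r_i)) ≥ C R^{−q} μ(B(w,R)). -/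
open MeasureTheory Metric ENNReal

lemma doubling_iter {X : Type*} [MetricSpace X] [MeasurableSpace X]
    (μ : Measure X) (C_D : ℝ)
    (hdbl : ∀ (x : X) (r : ℝ), 0 < r →
      μ (Metric.closedBall x (2 * r)) ≤ ENNReal.ofReal C_D * μ (Metric.closedBall x r))
    (x : X) (r : ℝ) (hr : 0 < r) (k : ℕ) :
    μ (closedBall x (2^k * r)) ≤ (ENNReal.ofReal C_D)^k * μ (closedBall x r) := by
  induction k with
  | zero => simp
  | succ k ih =>
    have h2 : (2:ℝ)^(k+1) * r = 2 * (2^k * r) := by ring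
    rw [h2]
    calc μ (closedBall x (2 * (2^k * r))) ≤ ENNReal.ofReal C_D * μ (closedBall x (2^k*r)) :=
          hdbl x _ (by positivity)
      _ ≤ ENNReal.ofReal C_D * ((ENNReal.ofReal C_D)^k * μ (closedBall x r)) := by gcongr
      _ = (ENNReal.ofReal C_D)^(k+1) * μ (closedBall x r) := by ring


lemma greedy_sep {X : Type*} [MetricSpace X] (e : ℕ → X) (b : ℝ) (hb : 0 ≤ b) (S : Finset ℕ) :
    ∃ M ⊆ S, (∀ m ∈ M, ∀ m' ∈ M, m ≠ m' → b < dist (e m) (e m')) ∧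
      ∀ i ∈ S, ∃ m ∈ M, dist (e i) (e m) ≤ b := by
  induction S using Finset.strongInduction with
  | _ S ih =>
    rcases S.eq_empty_or_nonempty with rfl | ⟨i₀, hi₀⟩
    · exact ⟨∅, by simp, by simp, by simp⟩
    · classical
      set S' := S.filter (fun i => b < dist (e i) (e i₀)) with hS'
      have hi₀S' : i₀ ∉ S' := by
        simp only [hS', Finset.mem_filter]
        rintro ⟨-, h⟩
        simp at h; linarith
      have hss : S' ⊂ S :=
        Finset.ssubset_iff_of_subset (Finset.filter_subset _ _) |>.2 ⟨i₀, hi₀, hi₀S'⟩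
      obtain ⟨M', hM'S, hsep, hcov⟩ := ih S' hss
      have hM'mem : ∀ m ∈ M', b < dist (e m) (e i₀) := fun m hm => by
        have := hM'S hm; rw [hS', Finset.mem_filter] at this; exact this.2
      refine ⟨insert i₀ M', ?_, ?_, ?_⟩
      · intro x hx
        rcases Finset.mem_insert.1 hx with rfl | hx
        · exact hi₀
        · exact (Finset.filter_subset _ _) (hM'S hx)
      · intro m hm m' hm' hne
        have h1 := Finset.mem_insert.1 hm
        have h2 := Finset.mem_insert.1 hm'
        rcases h1 with rfl | h1 <;> rcases h2 with rfl | h2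
        · exact absurd rfl hne
        · rw [dist_comm]; exact hM'mem _ h2
        · exact hM'mem _ h1
        · exact hsep _ h1 _ h2 hne
      · intro i hi
        by_cases hc : b < dist (e i) (e i₀)
        · have hiS' : i ∈ S' := by rw [hS', Finset.mem_filter]; exact ⟨hi, hc⟩
          obtain ⟨m, hm, hdm⟩ := hcov i hiS'
          exact ⟨m, Finset.mem_insert_of_mem hm, hdm⟩
        · exact ⟨i₀, Finset.mem_insert_self _ _, le_of_not_gt hc⟩

lemma doubling_tb {X : Type*} [MetricSpace X] [MeasurableSpace X] [BorelSpace X]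
    (μ : Measure X)
    (hvol : ∀ (x : X) (r : ℝ), 0 < r →
      0 < μ (Metric.closedBall x r) ∧ μ (Metric.closedBall x r) < ⊤)
    (C_D : ℝ) (hCD : 1 ≤ C_D)
    (hdbl : ∀ (x : X) (r : ℝ), 0 < r →
      μ (Metric.closedBall x (2 * r)) ≤ ENNReal.ofReal C_D * μ (Metric.closedBall x r))
    (x : X) (R : ℝ) : TotallyBounded (closedBall x R) := by
  classical
  by_contra hTB
  rw [Metric.totallyBounded_iff] at hTB
  push_neg at hTB
  obtain ⟨ε, hε, hnet⟩ := hTB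
  by_cases hRε : R < ε
  · refine hnet {x} (Set.finite_singleton x) ?_
    intro p hp
    refine Set.mem_biUnion rfl ?_
    · simp only [mem_ball]
      exact lt_of_le_of_lt (mem_closedBall.1 hp) hRε
  push_neg at hRε
  have hR : 0 < R := lt_of_lt_of_le hε hRε
  obtain ⟨k, hk⟩ := pow_unbounded_of_one_lt (R := ℝ) (9*R/ε) (by norm_num : (1:ℝ) < 2)
  have hk' : 3*R ≤ 2^k * (ε/3) := by
    rw [div_lt_iff₀ hε] at hk
    nlinarith
  set N : ℕ := ⌈C_D^k⌉₊ with hN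
  -- cardinality bound for ε-separated subsets of closedBall x R
  have hcard_bound : ∀ t : Finset X, (∀ y ∈ t, y ∈ closedBall x R) →
      (∀ y ∈ t, ∀ y' ∈ t, y ≠ y' → ε ≤ dist y y') → t.card ≤ N := by
    intro t htball htsep
    have hdisj : (↑t : Set X).PairwiseDisjoint (fun y => closedBall y (ε/3)) := by
      intro y hy y' hy' hne
      rw [Function.onFun, Set.disjoint_left]
      intro p hp hp'
      have h1 : dist y y' ≤ dist p y + dist p y' := dist_triangle_left _ _ _
      have := htsep y hy y' hy' hne
      have hp1 : dist p y ≤ ε/3 := mem_closedBall.1 hp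
      have hp2 : dist p y' ≤ ε/3 := mem_closedBall.1 hp'
      linarith
    have hsum : ∑ y ∈ t, μ (closedBall y (ε/3)) ≤ μ (closedBall x (2*R)) := by
      rw [← measure_biUnion_finset hdisj (fun y _ => measurableSet_closedBall)]
      refine measure_mono ?_
      intro p hp
      simp only [Set.mem_iUnion] at hp
      obtain ⟨y, hy, hp⟩ := hp
      have h1 : dist p y ≤ ε/3 := mem_closedBall.1 hp
      have h2 : dist y x ≤ R := mem_closedBall.1 (htball y hy)
      have : dist p x ≤ dist p y + dist y x := dist_triangle _ _ _
      refine mem_closedBall.2 (by linarith)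
    have hlow : ∀ y ∈ t, μ (closedBall x (2*R)) ≤
        (ENNReal.ofReal C_D)^k * μ (closedBall y (ε/3)) := by
      intro y hy
      have hsub : closedBall x (2*R) ⊆ closedBall y (2^k * (ε/3)) := by
        intro p hp
        have h1 : dist p x ≤ 2*R := mem_closedBall.1 hp
        have h2 : dist x y ≤ R := dist_comm x y ▸ mem_closedBall.1 (htball y hy)
        have : dist p y ≤ dist p x + dist x y := dist_triangle _ _ _
        exact mem_closedBall.2 (by linarith)
      calc μ (closedBall x (2*R)) ≤ μ (closedBall y (2^k * (ε/3))) := measure_mono hsub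
        _ ≤ (ENNReal.ofReal C_D)^k * μ (closedBall y (ε/3)) :=
            doubling_iter μ C_D hdbl y (ε/3) (by linarith) k
    have hV := hvol x (2*R) (by linarith)
    have key : (t.card : ℝ≥0∞) * μ (closedBall x (2*R)) ≤
        (ENNReal.ofReal C_D)^k * μ (closedBall x (2*R)) := by
      calc (t.card : ℝ≥0∞) * μ (closedBall x (2*R))
          = ∑ _y ∈ t, μ (closedBall x (2*R)) := by
            rw [Finset.sum_const, nsmul_eq_mul]
        _ ≤ ∑ y ∈ t, (ENNReal.ofReal C_D)^k * μ (closedBall y (ε/3)) :=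
            Finset.sum_le_sum hlow
        _ = (ENNReal.ofReal C_D)^k * ∑ y ∈ t, μ (closedBall y (ε/3)) := by
            rw [Finset.mul_sum]
        _ ≤ (ENNReal.ofReal C_D)^k * μ (closedBall x (2*R)) := by
            exact mul_le_mul_right hsum _
    have hcast : (t.card : ℝ≥0∞) ≤ (ENNReal.ofReal C_D)^k :=
      (ENNReal.mul_le_mul_iff_left (ne_of_gt hV.1) (ne_of_lt hV.2)).1 key
    have : (t.card : ℝ≥0∞) ≤ (N : ℝ≥0∞) := by
      refine le_trans hcast ?_
      rw [← ENNReal.ofReal_pow (by linarith)]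
      rw [← ENNReal.ofReal_natCast N]
      exact ENNReal.ofReal_le_ofReal (Nat.le_ceil _)
    exact_mod_cast this
  -- construct an infinite ε-separated sequence
  have hstep : ∀ t : Finset X, ∃ p, p ∈ closedBall x R ∧ ∀ y ∈ t, ε ≤ dist p y := by
    intro t
    have h := hnet (↑t) t.finite_toSet
    rw [Set.not_subset] at h
    obtain ⟨p, hp, hpn⟩ := h
    refine ⟨p, hp, fun y hy => ?_⟩
    by_contra hlt
    push_neg at hlt
    exact hpn (Set.mem_biUnion hy (mem_ball.2 hlt))
  choose f hf1 hf2 using hstep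
  let g : ℕ → Finset X := fun n => Nat.rec ∅ (fun _ t => insert (f t) t) n
  have hg_succ : ∀ n, g (n+1) = insert (f (g n)) (g n) := fun n => rfl
  have hgball : ∀ n, ∀ y ∈ g n, y ∈ closedBall x R := by
    intro n
    induction n with
    | zero => intro y hy; simp [g] at hy
    | succ n ih =>
      intro y hy
      rw [hg_succ, Finset.mem_insert] at hy
      rcases hy with rfl | hy
      · exact hf1 _
      · exact ih y hy
  have hfnot : ∀ n, f (g n) ∉ g n := by
    intro n hmem
    have := hf2 (g n) _ hmem
    simp at this
    linarith
  have hgsep : ∀ n, ∀ y ∈ g n, ∀ y' ∈ g n, y ≠ y' → ε ≤ dist y y' := by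
    intro n
    induction n with
    | zero => intro y hy; simp [g] at hy
    | succ n ih =>
      intro y hy y' hy' hne
      rw [hg_succ, Finset.mem_insert] at hy hy'
      rcases hy with rfl | hy <;> rcases hy' with h' | hy'
      · exact absurd h'.symm hne
      · exact hf2 _ _ hy'
      · rcases h' with rfl; rw [dist_comm]; exact hf2 _ _ hy
      · exact ih y hy y' hy' hne
  have hgcard : ∀ n, (g n).card = n := by
    intro n
    induction n with
    | zero => simp [g]
    | succ n ih => rw [hg_succ, Finset.card_insert_of_notMem (hfnot n), ih]
  have := hcard_bound (g (N+1)) (hgball (N+1)) (hgsep (N+1))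
  have h2 := hgcard (N+1)
  rw [h2] at this
  omega

lemma aux_content {X : Type*} [MetricSpace X] [MeasurableSpace X] [BorelSpace X]
    (μ : Measure X)
    (hvol : ∀ (x : X) (r : ℝ), 0 < r →
      0 < μ (Metric.closedBall x r) ∧ μ (Metric.closedBall x r) < ⊤)
    (C_D : ℝ) (hCD : 1 ≤ C_D)
    (hdbl : ∀ (x : X) (r : ℝ), 0 < r →
      μ (Metric.closedBall x (2 * r)) ≤ ENNReal.ofReal C_D * μ (Metric.closedBall x r))
    (E : Set X) (q : ℝ) (hq : 0 < q)
    (s c₀ : ℝ) (hs0 : 0 ≤ s) (hs : s < q) (hc₀ : 0 < c₀)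
    (hthick : ∀ x ∈ E, ∀ r R : ℝ, 0 < r → r < R → ENNReal.ofReal R < EMetric.diam E →
      ENNReal.ofReal (c₀ * (r / R) ^ s) * μ (Metric.closedBall x R) ≤
        μ (Metric.thickening r E ∩ Metric.closedBall x R))
    (a : ℕ) (ha4 : 4 ≤ a)
    (hagrow : C_D^4 * (3/2:ℝ)^s / c₀ ≤ ((2:ℝ)^(q-s))^a) :
    ∀ n : ℕ, ∀ w ∈ E, ∀ R : ℝ, 0 < R → ENNReal.ofReal R < EMetric.diam E →
      ∀ (G : Finset ℕ) (z : ℕ → X) (ρ : ℕ → ℝ),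
      (∀ i ∈ G, 0 < ρ i) → (∀ i ∈ G, ρ i ≤ 2*R) → (∀ i ∈ G, R ≤ 2^n * ρ i) →
      (E ∩ closedBall w R ⊆ ⋃ i ∈ G, closedBall (z i) (ρ i)) →
      ENNReal.ofReal ((2^(-q:ℝ) / C_D^(a+3)) * R^(-q)) * μ (closedBall w R) ≤
      ∑ i ∈ G, ENNReal.ofReal ((ρ i)^(-q)) * μ (closedBall (z i) (ρ i)) := by
  classical
  have hCD0 : (0:ℝ) < C_D := lt_of_lt_of_le one_pos hCD
  have h2a : (0:ℝ) < 2^a := by positivity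
  have h2a16 : (16:ℝ) ≤ 2^a := by
    calc (16:ℝ) = 2^4 := by norm_num
    _ ≤ 2^a := pow_le_pow_right₀ (by norm_num) ha4
  set δ : ℝ := 1/(3*2^a) with hδ
  have hδpos : 0 < δ := by rw [hδ]; positivity
  have hδsmall : δ ≤ 1/48 := by
    rw [hδ]
    rw [div_le_div_iff₀ (by positivity) (by norm_num)]
    nlinarith
  set C' : ℝ := 2^(-q:ℝ) / C_D^(a+3) with hC'
  have hC'pos : 0 < C' := by
    rw [hC']
    exact div_pos (Real.rpow_pos_of_pos (by norm_num) _) (by positivity)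
  set K := ENNReal.ofReal C_D with hK
  have hKne0 : K ≠ 0 := by rw [hK]; simp [ENNReal.ofReal_pos, hCD0]
  have hKnetop : K ≠ ⊤ := ENNReal.ofReal_ne_top
  intro n
  induction n using Nat.strong_induction_on with
  | _ n IH =>
  intro w hw R hR hdiam G z ρ hρpos hρle hρmin hcover
  by_cases hbig : ∃ i ∈ G, δ*R ≤ ρ i ∧
      (closedBall (z i) (ρ i) ∩ (E ∩ closedBall w (3/4*R))).Nonempty
  · -- BIG BALL CASE
    obtain ⟨i, hiG, hρi, y, hyB, hyE, hyw⟩ := hbig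
    have hρipos := hρpos i hiG
    have hsub : closedBall w R ⊆ closedBall (z i) (2^(a+3) * ρ i) := by
      intro u hu
      have d1 : dist u w ≤ R := mem_closedBall.1 hu
      have d2 : dist y w ≤ 3/4*R := mem_closedBall.1 hyw
      have d3 : dist y (z i) ≤ ρ i := mem_closedBall.1 hyB
      have d4 : dist u (z i) ≤ dist u w + dist w y + dist y (z i) := dist_triangle4 u w y (z i)
      have hRρ : R ≤ 3*2^a*ρ i := by
        have h := hρi
        rw [hδ, div_mul_eq_mul_div, div_le_iff₀ (by positivity)] at h
        linarith
      have hpow : (2:ℝ)^(a+3) = 2^a*8 := by rw [pow_add]; norm_num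
      rw [mem_closedBall]
      rw [dist_comm w y] at d4
      rw [hpow]
      nlinarith
    have hμ : μ (closedBall w R) ≤ K^(a+3) * μ (closedBall (z i) (ρ i)) :=
      le_trans (measure_mono hsub) (doubling_iter μ C_D hdbl _ _ hρipos (a+3))
    have hKp0 : K^(a+3) ≠ 0 := pow_ne_zero _ hKne0
    have hKpt : K^(a+3) ≠ ⊤ := ENNReal.pow_ne_top hKnetop
    have hterm : ENNReal.ofReal (C' * R^(-q)) * μ (closedBall w R) ≤
        ENNReal.ofReal ((ρ i)^(-q)) * μ (closedBall (z i) (ρ i)) := by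
      rw [← ENNReal.mul_le_mul_iff_right hKp0 hKpt]
      have e1 : K^(a+3) * (ENNReal.ofReal (C' * R^(-q)) * μ (closedBall w R))
          = ENNReal.ofReal ((2*R)^(-q)) * μ (closedBall w R) := by
        rw [hK, ← ENNReal.ofReal_pow hCD0.le, ← mul_assoc,
          ← ENNReal.ofReal_mul (by positivity)]
        congr 2
        rw [hC', Real.mul_rpow (by norm_num) hR.le]
        field_simp
      rw [e1]
      calc ENNReal.ofReal ((2*R)^(-q)) * μ (closedBall w R)
          ≤ ENNReal.ofReal ((ρ i)^(-q)) * μ (closedBall w R) :=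
            mul_le_mul_left (ENNReal.ofReal_le_ofReal
              (Real.rpow_le_rpow_of_nonpos hρipos (hρle i hiG) (by linarith))) _
        _ ≤ ENNReal.ofReal ((ρ i)^(-q)) * (K^(a+3) * μ (closedBall (z i) (ρ i))) :=
            mul_le_mul_right hμ _
        _ = K^(a+3) * (ENNReal.ofReal ((ρ i)^(-q)) * μ (closedBall (z i) (ρ i))) := by ring
    exact le_trans hterm (Finset.single_le_sum
      (f := fun j => ENNReal.ofReal ((ρ j)^(-q)) * μ (closedBall (z j) (ρ j)))
      (fun j _ => zero_le) hiG)
  · -- SMALL BALLS CASE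
    have hsmall : ∀ i ∈ G,
        (closedBall (z i) (ρ i) ∩ (E ∩ closedBall w (3/4*R))).Nonempty → ρ i < δ*R := by
      intro i hi hne
      by_contra hcon
      push_neg at hcon
      exact hbig ⟨i, hi, hcon, hne⟩
    have hδR : δ*R ≤ R/48 := by
      have := mul_le_mul_of_nonneg_right hδsmall hR.le
      linarith
    have hδRpos : 0 < δ*R := by positivity
    -- a < n
    have hwmem : w ∈ E ∩ closedBall w R := ⟨hw, mem_closedBall_self hR.le⟩
    have hwcov := hcover hwmem
    simp only [Set.mem_iUnion, exists_prop] at hwcov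
    obtain ⟨i₀, hi₀G, hwB⟩ := hwcov
    have hρi₀ : ρ i₀ < δ*R :=
      hsmall i₀ hi₀G ⟨w, hwB, hw, mem_closedBall_self (by linarith)⟩
    have han : a < n := by
      by_contra hna
      push_neg at hna
      have h1 : R ≤ 2^n * ρ i₀ := hρmin i₀ hi₀G
      have h2 : (2:ℝ)^n ≤ 2^a := pow_le_pow_right₀ (by norm_num) hna
      have h3 : (0:ℝ) < 2^n := by positivity
      have h4 : (2:ℝ)^n * ρ i₀ < 2^n * (δ*R) := mul_lt_mul_of_pos_left hρi₀ h3
      have h5 : (2:ℝ)^n * (δ * R) ≤ 2^a * (δ*R) :=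
        mul_le_mul_of_nonneg_right h2 (by positivity)
      have h6 : (2:ℝ)^a * (δ*R) = R/3 := by rw [hδ]; field_simp
      linarith
    -- Istar and chosen points e
    set Istar := G.filter
      (fun i => (closedBall (z i) (ρ i) ∩ (E ∩ closedBall w (9/16*R))).Nonempty) with hIstar
    have echoice : ∀ i, ∃ p : X, i ∈ Istar →
        p ∈ closedBall (z i) (ρ i) ∧ p ∈ E ∧ p ∈ closedBall w (9/16*R) := by
      intro i
      by_cases h : i ∈ Istar
      · rw [hIstar, Finset.mem_filter] at h
        obtain ⟨p, hp⟩ := h.2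
        exact ⟨p, fun _ => ⟨hp.1, hp.2.1, hp.2.2⟩⟩
      · exact ⟨w, fun hi => absurd hi h⟩
    choose e heprop using echoice
    have hsmallI : ∀ i ∈ Istar, ρ i < δ*R := by
      intro i hi
      have h := Finset.mem_filter.1 hi
      obtain ⟨p, hp1, hp2, hp3⟩ := h.2
      refine hsmall i h.1 ⟨p, hp1, hp2, mem_closedBall.2 ?_⟩
      have := mem_closedBall.1 hp3
      linarith
    obtain ⟨M, hMI, hsep, hnear⟩ := greedy_sep e (12*(δ*R)) (by positivity) Istar
    -- coverage of the thickening by the enlarged selected balls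
    have hcov2 : Metric.thickening (δ*R) E ∩ closedBall w (R/2) ⊆
        ⋃ m ∈ M, closedBall (e m) (24*(δ*R)) := by
      rintro y ⟨hyT, hyB⟩
      obtain ⟨p, hpE, hpd⟩ := Metric.mem_thickening_iff.1 hyT
      have hyw : dist y w ≤ R/2 := mem_closedBall.1 hyB
      have hpw : dist p w ≤ 9/16*R := by
        have h := dist_triangle p y w
        rw [dist_comm p y] at h
        linarith
      have hpcov := hcover ⟨hpE, mem_closedBall.2 (by linarith)⟩
      simp only [Set.mem_iUnion, exists_prop] at hpcov
      obtain ⟨i, hiG, hpB⟩ := hpcov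
      have hiI : i ∈ Istar := by
        rw [hIstar, Finset.mem_filter]
        exact ⟨hiG, ⟨p, hpB, hpE, mem_closedBall.2 hpw⟩⟩
      have hρiS : ρ i < δ*R := hsmallI i hiI
      obtain ⟨he1, he2, he3⟩ := heprop i hiI
      have hd : dist y (e i) ≤ 3*(δ*R) := by
        have h4 := dist_triangle4 y p (z i) (e i)
        have h5 : dist p (z i) ≤ ρ i := mem_closedBall.1 hpB
        have h6 : dist (z i) (e i) ≤ ρ i := by rw [dist_comm]; exact mem_closedBall.1 he1
        linarith
      obtain ⟨m, hmM, hdm⟩ := hnear i hiI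
      refine Set.mem_biUnion hmM (mem_closedBall.2 ?_)
      have := dist_triangle y (e i) (e m)
      linarith
    -- fatness of E at scale δR
    have hth := hthick w hw (δ*R) (R/2) (by positivity) (by linarith)
      (lt_of_le_of_lt (ENNReal.ofReal_le_ofReal (by linarith)) hdiam)
    have hratio : δ*R/(R/2) = 2*δ := by field_simp
    rw [hratio] at hth
    have hA : ENNReal.ofReal (c₀ * (2*δ)^s) * μ (closedBall w (R/2)) ≤
        K^3 * ∑ m ∈ M, μ (closedBall (e m) (3*(δ*R))) := by
      calc ENNReal.ofReal (c₀ * (2*δ)^s) * μ (closedBall w (R/2))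
          ≤ μ (Metric.thickening (δ*R) E ∩ closedBall w (R/2)) := hth
        _ ≤ μ (⋃ m ∈ M, closedBall (e m) (24*(δ*R))) := measure_mono hcov2
        _ ≤ ∑ m ∈ M, μ (closedBall (e m) (24*(δ*R))) := measure_biUnion_finset_le _ _
        _ ≤ ∑ m ∈ M, K^3 * μ (closedBall (e m) (3*(δ*R))) := by
            refine Finset.sum_le_sum (fun m hm => ?_)
            have h24 : (24:ℝ)*(δ*R) = 2^3 * (3*(δ*R)) := by ring
            rw [h24]
            exact doubling_iter μ C_D hdbl _ _ (by positivity) 3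
        _ = K^3 * ∑ m ∈ M, μ (closedBall (e m) (3*(δ*R))) := by rw [Finset.mul_sum]
    -- the sub-families
    set Gm : ℕ → Finset ℕ := fun m => G.filter
      (fun i => (closedBall (z i) (ρ i) ∩ (E ∩ closedBall (e m) (3*(δ*R)))).Nonempty) with hGm
    have hGmmem : ∀ m, ∀ i, i ∈ Gm m ↔ i ∈ G ∧
        (closedBall (z i) (ρ i) ∩ (E ∩ closedBall (e m) (3*(δ*R)))).Nonempty := by
      intro m i
      rw [hGm]
      exact Finset.mem_filter
    have hGmsmall : ∀ m ∈ M, ∀ i ∈ Gm m, ρ i < δ*R := by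
      intro m hmM i hi
      obtain ⟨hiG, p, hp1, hp2, hp3⟩ := (hGmmem m i).1 hi
      obtain ⟨he1, he2, he3⟩ := heprop m (hMI hmM)
      refine hsmall i hiG ⟨p, hp1, hp2, mem_closedBall.2 ?_⟩
      have h1 := mem_closedBall.1 hp3
      have h2 := mem_closedBall.1 he3
      have h3 := dist_triangle p (e m) w
      linarith
    have hsub_each : ∀ m ∈ M,
        ENNReal.ofReal (C' * (3*(δ*R))^(-q)) * μ (closedBall (e m) (3*(δ*R))) ≤
        ∑ i ∈ Gm m, ENNReal.ofReal ((ρ i)^(-q)) * μ (closedBall (z i) (ρ i)) := by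
      intro m hmM
      obtain ⟨he1, he2, he3⟩ := heprop m (hMI hmM)
      refine IH (n-a) (by omega) (e m) he2 (3*(δ*R)) (by positivity)
        (lt_of_le_of_lt (ENNReal.ofReal_le_ofReal (by linarith)) hdiam)
        (Gm m) z ρ (fun i hi => hρpos i ((hGmmem m i).1 hi).1)
        (fun i hi => by have := hGmsmall m hmM i hi; linarith)
        (fun i hi => ?_) ?_
      · -- lower bound on radii at the smaller scale
        have h1 : R ≤ 2^n * ρ i := hρmin i ((hGmmem m i).1 hi).1
        have hps : (2:ℝ)^(n-a)*2^a = 2^n := pow_sub_mul_pow 2 (le_of_lt han)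
        have h3 : 3*(δ*R) = R/2^a := by rw [hδ]; field_simp
        rw [h3, div_le_iff₀ h2a]
        calc R ≤ 2^n * ρ i := h1
          _ = 2^(n-a) * ρ i * 2^a := by rw [← hps]; ring
      · -- covering of the small ball
        rintro y ⟨hyE, hyB⟩
        have h1 := mem_closedBall.1 hyB
        have h2 := mem_closedBall.1 he3
        have h3 := dist_triangle y (e m) w
        have hyw : y ∈ closedBall w R := mem_closedBall.2 (by linarith)
        have hycov := hcover ⟨hyE, hyw⟩
        simp only [Set.mem_iUnion, exists_prop] at hycov
        obtain ⟨i, hiG, hyBi⟩ := hycov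
        have hiGm : i ∈ Gm m := (hGmmem m i).2 ⟨hiG, ⟨y, hyBi, hyE, hyB⟩⟩
        exact Set.mem_biUnion hiGm hyBi
    -- the sub-families are pairwise disjoint
    have hdisjGm : (↑M : Set ℕ).PairwiseDisjoint Gm := by
      intro m hm m' hm' hne
      rw [Function.onFun, Finset.disjoint_left]
      intro i hi hi'
      obtain ⟨hiG, p, hp1, hp2, hp3⟩ := (hGmmem m i).1 hi
      obtain ⟨-, p', hp1', hp2', hp3'⟩ := (hGmmem m' i).1 hi'
      have hρsm : ρ i < δ*R := hGmsmall m hm i hi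
      have hsepmm := hsep m hm m' hm' hne
      have t1 := dist_triangle4 (e m) p p' (e m')
      have t2 := dist_triangle p (z i) p'
      have u1 : dist (e m) p ≤ 3*(δ*R) := by rw [dist_comm]; exact mem_closedBall.1 hp3
      have u2 : dist p' (e m') ≤ 3*(δ*R) := mem_closedBall.1 hp3'
      have u3 : dist p (z i) ≤ ρ i := mem_closedBall.1 hp1
      have u4 : dist (z i) p' ≤ ρ i := by rw [dist_comm]; exact mem_closedBall.1 hp1'
      linarith
    have hsum2 : ∑ m ∈ M, ∑ i ∈ Gm m, ENNReal.ofReal ((ρ i)^(-q)) * μ (closedBall (z i) (ρ i))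
        ≤ ∑ i ∈ G, ENNReal.ofReal ((ρ i)^(-q)) * μ (closedBall (z i) (ρ i)) := by
      rw [← Finset.sum_biUnion hdisjGm]
      refine Finset.sum_le_sum_of_subset ?_
      intro i hi
      obtain ⟨m, hm, hi⟩ := Finset.mem_biUnion.1 hi
      exact ((hGmmem m i).1 hi).1
    have h3 : ENNReal.ofReal (C' * (3*(δ*R))^(-q)) * ∑ m ∈ M, μ (closedBall (e m) (3*(δ*R)))
        ≤ ∑ i ∈ G, ENNReal.ofReal ((ρ i)^(-q)) * μ (closedBall (z i) (ρ i)) := by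
      rw [Finset.mul_sum]
      exact le_trans (Finset.sum_le_sum hsub_each) hsum2
    -- the key real-number inequality
    have h3δ : 3*δ = ((2:ℝ)^a)⁻¹ := by rw [hδ]; field_simp
    have h2δ : 2*δ = (2/3) * ((2:ℝ)^a)⁻¹ := by rw [hδ]; field_simp
    have hcore : C_D^4 ≤ (3*δ)^(-q) * (c₀ * (2*δ)^s) := by
      rw [h3δ, h2δ]
      rw [Real.inv_rpow (by positivity), Real.rpow_neg (by positivity), inv_inv]
      rw [Real.mul_rpow (by norm_num) (by positivity), Real.inv_rpow (by positivity)]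
      have hqs : ((2:ℝ)^a)^q * (((2:ℝ)^a)^s)⁻¹ = ((2:ℝ)^(q-s))^a := by
        rw [← Real.rpow_natCast 2 a, ← Real.rpow_natCast ((2:ℝ)^(q-s)) a]
        rw [← Real.rpow_mul (by norm_num : (0:ℝ) ≤ 2) (a:ℝ) q]
        rw [← Real.rpow_mul (by norm_num : (0:ℝ) ≤ 2) (a:ℝ) s]
        rw [← Real.rpow_mul (by norm_num : (0:ℝ) ≤ 2) (q-s) (a:ℝ)]
        rw [← Real.rpow_neg (by norm_num : (0:ℝ) ≤ 2)]
        rw [← Real.rpow_add (by norm_num : (0:ℝ) < 2)]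
        congr 1
        ring
      have h1 : ((2:ℝ)^a)^q * (c₀ * ((2/3:ℝ)^s * ((((2:ℝ)^a)^s)⁻¹))) =
          c₀ * (2/3:ℝ)^s * (((2:ℝ)^(q-s))^a) := by
        rw [← hqs]; ring
      rw [h1]
      have h23 : (2/3:ℝ)^s * (3/2:ℝ)^s = 1 := by
        rw [← Real.mul_rpow (by norm_num) (by norm_num)]
        norm_num
      have h2 : c₀ * (2/3:ℝ)^s * (C_D^4 * (3/2:ℝ)^s / c₀) ≤
          c₀ * (2/3:ℝ)^s * ((2:ℝ)^(q-s))^a := by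
        refine mul_le_mul_of_nonneg_left hagrow ?_
        positivity
      have h4 : c₀ * (2/3:ℝ)^s * (C_D^4 * (3/2:ℝ)^s / c₀) = C_D^4 * ((2/3:ℝ)^s * (3/2:ℝ)^s) := by
        field_simp
      rw [h4, h23, mul_one] at h2
      exact h2
    have hkey : C_D^4 * (C' * R^(-q)) ≤ C' * (3*(δ*R))^(-q) * (c₀ * (2*δ)^s) := by
      have h1 : (3*(δ*R)) = (3*δ)*R := by ring
      rw [h1, Real.mul_rpow (by positivity) hR.le]
      have hRq : (0:ℝ) < R^(-q) := Real.rpow_pos_of_pos hR _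
      have h2 := mul_le_mul_of_nonneg_right hcore (le_of_lt (mul_pos hC'pos hRq))
      calc C_D^4 * (C' * R^(-q)) ≤ ((3*δ)^(-q) * (c₀ * (2*δ)^s)) * (C' * R^(-q)) := h2
        _ = C' * ((3*δ)^(-q) * R^(-q)) * (c₀ * (2*δ)^s) := by ring
    -- final assembly
    have hKp40 : (K^4 : ℝ≥0∞) ≠ 0 := pow_ne_zero _ hKne0
    have hKp4t : (K^4 : ℝ≥0∞) ≠ ⊤ := ENNReal.pow_ne_top hKnetop
    rw [← ENNReal.mul_le_mul_iff_right hKp40 hKp4t]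
    have hμhalf : μ (closedBall w R) ≤ K * μ (closedBall w (R/2)) := by
      have h := hdbl w (R/2) (by positivity)
      have h2 : (2:ℝ)*(R/2) = R := by ring
      rw [h2] at h
      exact h
    calc K^4 * (ENNReal.ofReal (C' * R^(-q)) * μ (closedBall w R))
        = ENNReal.ofReal (C_D^4 * (C' * R^(-q))) * μ (closedBall w R) := by
          rw [hK, ← ENNReal.ofReal_pow hCD0.le, ← mul_assoc,
            ← ENNReal.ofReal_mul (by positivity)]
      _ ≤ ENNReal.ofReal (C' * (3*(δ*R))^(-q) * (c₀ * (2*δ)^s)) * μ (closedBall w R) :=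
          mul_le_mul_left (ENNReal.ofReal_le_ofReal hkey) _
      _ = ENNReal.ofReal (C' * (3*(δ*R))^(-q)) *
            (ENNReal.ofReal (c₀ * (2*δ)^s) * μ (closedBall w R)) := by
          rw [ENNReal.ofReal_mul (by positivity), mul_assoc]
      _ ≤ ENNReal.ofReal (C' * (3*(δ*R))^(-q)) *
            (ENNReal.ofReal (c₀ * (2*δ)^s) * (K * μ (closedBall w (R/2)))) :=
          mul_le_mul_right (mul_le_mul_right hμhalf _) _
      _ = K * (ENNReal.ofReal (C' * (3*(δ*R))^(-q)) *
            (ENNReal.ofReal (c₀ * (2*δ)^s) * μ (closedBall w (R/2)))) := by ring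
      _ ≤ K * (ENNReal.ofReal (C' * (3*(δ*R))^(-q)) *
            (K^3 * ∑ m ∈ M, μ (closedBall (e m) (3*(δ*R))))) :=
          mul_le_mul_right (mul_le_mul_right hA _) _
      _ = K^4 * (ENNReal.ofReal (C' * (3*(δ*R))^(-q)) *
            ∑ m ∈ M, μ (closedBall (e m) (3*(δ*R)))) := by ring
      _ ≤ K^4 * ∑ i ∈ G, ENNReal.ofReal ((ρ i)^(-q)) * μ (closedBall (z i) (ρ i)) :=
          mul_le_mul_right h3 _

/-- (Lemma 5.1 of the paper.) If the upper Assouad codimension of a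
closed set `E` is less than `q`, then `E` satisfies a Hausdorff content density
condition of codimension `q`: every countable cover of `E ∩ B(w,R)` by closed balls of
radii at most `R` has codimension-`q` content at least `C R^{-q} μ(B(w,R))`. -/
theorem hausdorff_content_density_of_upper_assouad_codim_lt
    {X : Type*} [MetricSpace X] [CompleteSpace X] [MeasurableSpace X] [BorelSpace X]
    (μ : Measure X)
    (hvol : ∀ (x : X) (r : ℝ), 0 < r →
      0 < μ (Metric.closedBall x r) ∧ μ (Metric.closedBall x r) < ⊤)
    (C_D : ℝ) (hCD : 1 ≤ C_D)
    (hdbl : ∀ (x : X) (r : ℝ), 0 < r →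
      μ (Metric.closedBall x (2 * r)) ≤ ENNReal.ofReal C_D * μ (Metric.closedBall x r))
    (E : Set X) (hE : IsClosed E) (q : ℝ) (hq : 0 < q)
    (s c₀ : ℝ) (hs0 : 0 ≤ s) (hs : s < q) (hc₀ : 0 < c₀)
    (hthick : ∀ x ∈ E, ∀ r R : ℝ, 0 < r → r < R → ENNReal.ofReal R < EMetric.diam E →
      ENNReal.ofReal (c₀ * (r / R) ^ s) * μ (Metric.closedBall x R) ≤
        μ (Metric.thickening r E ∩ Metric.closedBall x R)) :
    ∃ C : ℝ, 0 < C ∧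
      ∀ w ∈ E, ∀ R : ℝ, 0 < R → ENNReal.ofReal R < EMetric.diam E →
        ∀ (z : ℕ → X) (ρ : ℕ → ℝ), (∀ i, 0 < ρ i) → (∀ i, ρ i ≤ R) →
          E ∩ Metric.closedBall w R ⊆ ⋃ i, Metric.closedBall (z i) (ρ i) →
          ENNReal.ofReal (C * R ^ (-q)) * μ (Metric.closedBall w R) ≤
            ∑' i, ENNReal.ofReal ((ρ i) ^ (-q)) * μ (Metric.closedBall (z i) (ρ i)) := by
  classical
  have hCD0 : (0:ℝ) < C_D := lt_of_lt_of_le one_pos hCD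
  have h2qs : (1:ℝ) < 2^(q-s) := by
    have h0 : (2:ℝ)^(0:ℝ) = 1 := Real.rpow_zero 2
    rw [← h0]
    exact Real.rpow_lt_rpow_of_exponent_lt (by norm_num) (by linarith)
  obtain ⟨a₀, ha₀⟩ := pow_unbounded_of_one_lt (R := ℝ) (C_D^4 * (3/2:ℝ)^s / c₀) h2qs
  set a := max a₀ 4 with ha
  have ha4 : 4 ≤ a := le_max_right _ _
  have hagrow : C_D^4 * (3/2:ℝ)^s / c₀ ≤ ((2:ℝ)^(q-s))^a :=
    le_trans (le_of_lt ha₀) (pow_le_pow_right₀ (le_of_lt h2qs) (le_max_left _ _))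
  set C' : ℝ := 2^(-q:ℝ) / C_D^(a+3) with hC'
  have hC'pos : 0 < C' := by
    rw [hC']
    exact div_pos (Real.rpow_pos_of_pos (by norm_num) _) (by positivity)
  refine ⟨C' / C_D, by positivity, ?_⟩
  intro w hw R hR hdiam z ρ hρpos hρle hcover
  set K := ENNReal.ofReal C_D with hK
  have hKne0 : K ≠ 0 := by rw [hK]; simp [ENNReal.ofReal_pos, hCD0]
  have hKnetop : K ≠ ⊤ := ENNReal.ofReal_ne_top
  -- compactness and finite subcover
  have hTB : TotallyBounded (E ∩ closedBall w R) :=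
    (doubling_tb μ hvol C_D hCD hdbl w R).subset Set.inter_subset_right
  have hcpt : IsCompact (E ∩ closedBall w R) :=
    isCompact_iff_totallyBounded_isComplete.2 ⟨hTB, (hE.inter isClosed_closedBall).isComplete⟩
  have hcov_open : E ∩ closedBall w R ⊆ ⋃ i, ball (z i) (2 * ρ i) := by
    refine subset_trans hcover (Set.iUnion_mono fun i p hp => ?_)
    exact mem_ball.2 (lt_of_le_of_lt (mem_closedBall.1 hp) (by linarith [hρpos i]))
  obtain ⟨G, hG⟩ := hcpt.elim_finite_subcover (fun i => ball (z i) (2*ρ i))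
    (fun i => isOpen_ball) hcov_open
  -- choose the scale n
  have hn : ∀ i : ℕ, ∃ n : ℕ, R ≤ 2^n * (2 * ρ i) := by
    intro i
    obtain ⟨n, hn⟩ := pow_unbounded_of_one_lt (R := ℝ) (R / (2*ρ i)) (by norm_num : (1:ℝ) < 2)
    refine ⟨n, ?_⟩
    rw [div_lt_iff₀ (by linarith [hρpos i])] at hn
    linarith
  choose nf hnf using hn
  set n := G.sup nf with hn'
  have hminrad : ∀ i ∈ G, R ≤ 2^n * (2 * ρ i) := by
    intro i hi
    refine le_trans (hnf i) ?_
    have h1 : (2:ℝ)^(nf i) ≤ 2^n := pow_le_pow_right₀ (by norm_num) (Finset.le_sup hi)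
    have h2 : 0 < ρ i := hρpos i
    nlinarith
  -- apply the finite-cover content bound
  have hmain := aux_content μ hvol C_D hCD hdbl E q hq s c₀ hs0 hs hc₀ hthick a ha4 hagrow n w hw R hR hdiam G z
    (fun i => 2 * ρ i)
    (fun i _ => by linarith [hρpos i])
    (fun i _ => by linarith [hρle i])
    hminrad
    (by
      refine subset_trans hG ?_
      refine Set.iUnion₂_mono fun i _ => ?_
      exact ball_subset_closedBall)
  -- compare the doubled balls with the original ones
  have hterm : ∀ i ∈ G, ENNReal.ofReal ((2 * ρ i)^(-q)) * μ (closedBall (z i) (2 * ρ i)) ≤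
      K * (ENNReal.ofReal ((ρ i)^(-q)) * μ (closedBall (z i) (ρ i))) := by
    intro i _
    have h1 : (2 * ρ i)^(-q:ℝ) ≤ (ρ i)^(-q:ℝ) :=
      Real.rpow_le_rpow_of_nonpos (hρpos i) (by linarith [hρpos i]) (by linarith)
    calc ENNReal.ofReal ((2 * ρ i)^(-q)) * μ (closedBall (z i) (2 * ρ i))
        ≤ ENNReal.ofReal ((ρ i)^(-q)) * (K * μ (closedBall (z i) (ρ i))) :=
          mul_le_mul (ENNReal.ofReal_le_ofReal h1) (hdbl (z i) (ρ i) (hρpos i))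
            (zero_le) (zero_le)
      _ = K * (ENNReal.ofReal ((ρ i)^(-q)) * μ (closedBall (z i) (ρ i))) := by ring
  have hsum : ∑ i ∈ G, ENNReal.ofReal ((2 * ρ i)^(-q)) * μ (closedBall (z i) (2 * ρ i)) ≤
      K * ∑' i, ENNReal.ofReal ((ρ i)^(-q)) * μ (closedBall (z i) (ρ i)) := by
    calc ∑ i ∈ G, ENNReal.ofReal ((2 * ρ i)^(-q)) * μ (closedBall (z i) (2 * ρ i))
        ≤ ∑ i ∈ G, K * (ENNReal.ofReal ((ρ i)^(-q)) * μ (closedBall (z i) (ρ i))) :=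
          Finset.sum_le_sum hterm
      _ = K * ∑ i ∈ G, ENNReal.ofReal ((ρ i)^(-q)) * μ (closedBall (z i) (ρ i)) := by
          rw [Finset.mul_sum]
      _ ≤ K * ∑' i, ENNReal.ofReal ((ρ i)^(-q)) * μ (closedBall (z i) (ρ i)) :=
          mul_le_mul_right (ENNReal.sum_le_tsum G) _
  rw [← ENNReal.mul_le_mul_iff_right hKne0 hKnetop, ← mul_assoc]
  have heq : K * ENNReal.ofReal (C'/C_D * R^(-q)) = ENNReal.ofReal (C' * R^(-q)) := by
    rw [hK, ← ENNReal.ofReal_mul hCD0.le]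
    congr 1
    field_simp
  rw [heq]
  exact le_trans hmain hsum
end

section
/- Let n ≥ 1, 1 ≤ p < ∞ and β ∈ ℝ, and let Ω ⊆ ℝⁿ be an open set with nonempty complement that admits a (p,β)-Hardy inequality with constant C₀, i.e. ∫_Ω |u(x)|^p d_Ω(x)^{β−p} dx ≤ C₀ ∫_Ω ‖∇u(x)‖^p d_Ω(x)^β dx for every Lipschitz u : ℝⁿ → ℝ with compact support contained in Ω. Then there exist ε > 0 and C > 0, depending only on n, p, β and C₀, such that for every β' ∈ ℝ with β − ε ≤ β' ≤ β + ε, Ω admits the (p,β')-Hardy inequality with the same constant C: ∫_Ω |u(x)|^p d_Ω(x)^{β'−p} dx ≤ C ∫_Ω ‖∇u(x)‖^p d_Ω(x)^{β'} dx for every Lipschitz u : ℝⁿ → ℝ with compact support contained in Ω. -/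
open MeasureTheory Metric ENNReal

private lemma rpow_le_max_aux {δ D r e : ℝ} (hδ : 0 < δ) (h1 : δ ≤ r) (h2 : r ≤ D) :
    r ^ e ≤ max (δ ^ e) (D ^ e) := by
  rcases le_or_gt 0 e with he | he
  · exact le_max_of_le_right (Real.rpow_le_rpow (by linarith) h2 he)
  · exact le_max_of_le_left (Real.rpow_le_rpow_of_nonpos hδ h1 he.le)

private lemma add_rpow_le_aux {a b p : ℝ} (ha : 0 ≤ a) (hb : 0 ≤ b) (hp : 0 ≤ p) :
    (a + b) ^ p ≤ 2 ^ p * a ^ p + 2 ^ p * b ^ p := by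
  have h1 : a + b ≤ 2 * max a b := by
    rcases le_total a b with h | h
    · rw [max_eq_right h]; linarith
    · rw [max_eq_left h]; linarith
  calc (a + b) ^ p ≤ (2 * max a b) ^ p :=
        Real.rpow_le_rpow (by positivity) h1 hp
    _ = 2 ^ p * max a b ^ p := Real.mul_rpow (by norm_num) (le_max_of_le_left ha)
    _ ≤ 2 ^ p * (a ^ p + b ^ p) := by
        apply mul_le_mul_of_nonneg_left _ (by positivity)
        rcases le_total a b with h | h
        · rw [max_eq_right h]; exact le_add_of_nonneg_left (Real.rpow_nonneg ha p)
        · rw [max_eq_left h]; exact le_add_of_nonneg_right (Real.rpow_nonneg hb p)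
    _ = _ := by ring

set_option maxHeartbeats 1000000 in
/-- Euclidean case of Proposition 6.3: a `(p,β)`-Hardy inequality is
self-improving in the exponent `β`: there are `ε > 0` and `C > 0` such that `Ω` admits
the `(p,β')`-Hardy inequality with constant `C` for every `β' ∈ [β - ε, β + ε]`. -/
theorem hardy_self_improvement
    (n : ℕ) (hn : 1 ≤ n) (p β : ℝ) (hp : 1 ≤ p)
    (Ω : Set (EuclideanSpace ℝ (Fin n))) (hΩopen : IsOpen Ω) (hΩc : Ωᶜ.Nonempty)
    (C₀ : ℝ)
    (hHardy : ∀ u : EuclideanSpace ℝ (Fin n) → ℝ,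
      (∃ L : NNReal, LipschitzWith L u) → HasCompactSupport u → tsupport u ⊆ Ω →
      ∫⁻ x in Ω, ENNReal.ofReal (|u x| ^ p * Metric.infDist x Ωᶜ ^ (β - p)) ≤
        ENNReal.ofReal C₀ *
          ∫⁻ x in Ω, ENNReal.ofReal (‖fderiv ℝ u x‖ ^ p * Metric.infDist x Ωᶜ ^ β)) :
    ∃ ε : ℝ, 0 < ε ∧ ∃ C : ℝ, 0 < C ∧
      ∀ β' : ℝ, β - ε ≤ β' → β' ≤ β + ε →
        ∀ u : EuclideanSpace ℝ (Fin n) → ℝ,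
          (∃ L : NNReal, LipschitzWith L u) → HasCompactSupport u → tsupport u ⊆ Ω →
          ∫⁻ x in Ω, ENNReal.ofReal (|u x| ^ p * Metric.infDist x Ωᶜ ^ (β' - p)) ≤
            ENNReal.ofReal C *
              ∫⁻ x in Ω, ENNReal.ofReal (‖fderiv ℝ u x‖ ^ p * Metric.infDist x Ωᶜ ^ β') := by
  have hp0 : (0:ℝ) < p := lt_of_lt_of_le one_pos hp
  have hpne : p ≠ 0 := ne_of_gt hp0
  set M : ℝ := max C₀ 1 with hM
  have hM1 : (1:ℝ) ≤ M := le_max_right _ _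
  have hM0 : (0:ℝ) < M := lt_of_lt_of_le one_pos hM1
  have h2p : (0:ℝ) < (2:ℝ) ^ p := Real.rpow_pos_of_pos two_pos p
  set t : ℝ := (1 / (2 * M * 2 ^ p)) ^ (1/p) with ht
  have hbase : (0:ℝ) < 1 / (2 * M * 2 ^ p) := by positivity
  have htpos : 0 < t := Real.rpow_pos_of_pos hbase _
  have htp : t ^ p = 1 / (2 * M * 2 ^ p) := by
    rw [ht, ← Real.rpow_mul hbase.le, one_div p, inv_mul_cancel₀ hpne, Real.rpow_one]
  have hkey : M * 2 ^ p * t ^ p = 1/2 := by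
    rw [htp]; field_simp
  refine ⟨p * t, by positivity, 2 * (M * 2 ^ p), by positivity, ?_⟩
  intro β' hβ'1 hβ'2 u hul hucs hus
  obtain ⟨Lu, hLu⟩ := hul
  set s : ℝ := (β' - β) / p with hsdef
  have hsp : s * p = β' - β := div_mul_cancel₀ _ hpne
  have hs_le : |s| ≤ t := by
    rw [hsdef, abs_div, abs_of_pos hp0, div_le_iff₀ hp0]
    have : |β' - β| ≤ p * t := abs_le.2 ⟨by linarith, by linarith⟩
    linarith
  -- trivial case: u ≡ 0
  rcases (tsupport u).eq_empty_or_nonempty with hKe | hKne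
  · have h0 : ∀ x, ENNReal.ofReal (|u x| ^ p * Metric.infDist x Ωᶜ ^ (β' - p)) = 0 := by
      intro x
      have : u x = 0 := image_eq_zero_of_notMem_tsupport (by simp [hKe])
      rw [this, abs_zero, Real.zero_rpow hpne, zero_mul, ENNReal.ofReal_zero]
    rw [lintegral_congr h0, lintegral_zero]
    exact zero_le
  -- main case
  have hKcomp : IsCompact (tsupport u) := hucs
  have hdcont : Continuous (fun x : EuclideanSpace ℝ (Fin n) => Metric.infDist x Ωᶜ) :=
    (lipschitz_infDist_pt Ωᶜ).continuous
  obtain ⟨x₀, hx₀K, hx₀min⟩ := hKcomp.exists_isMinOn hKne hdcont.continuousOn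
  obtain ⟨x₁, hx₁K, hx₁max⟩ := hKcomp.exists_isMaxOn hKne hdcont.continuousOn
  have hd0 : 0 < Metric.infDist x₀ Ωᶜ := by
    have hx₀Ω : x₀ ∈ Ω := hus hx₀K
    exact (hΩopen.isClosed_compl.notMem_iff_infDist_pos hΩc).1 (fun h => h hx₀Ω)
  set δ : ℝ := Metric.infDist x₀ Ωᶜ / 2 with hδdef
  set D : ℝ := Metric.infDist x₁ Ωᶜ + 1 with hDdef
  have hδ : 0 < δ := by rw [hδdef]; linarith
  have hdK : ∀ x ∈ tsupport u, δ < Metric.infDist x Ωᶜ ∧ Metric.infDist x Ωᶜ < D := by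
    intro x hx
    constructor
    · have := hx₀min hx; rw [hδdef]; simp only [Set.mem_setOf_eq] at this ⊢; linarith
    · have := hx₁max hx; rw [hDdef]; simp only [Set.mem_setOf_eq] at this ⊢; linarith
  have hδD : δ < D := lt_trans (hdK x₀ hx₀K).1 (hdK x₀ hx₀K).2
  have hdΩ : ∀ x ∈ Ω, 0 < Metric.infDist x Ωᶜ := fun x hx =>
    (hΩopen.isClosed_compl.notMem_iff_infDist_pos hΩc).1 (fun h => h hx)
  -- the clamped power weight
  set h₀ : EuclideanSpace ℝ (Fin n) → ℝ :=
    fun x => (min (max (Metric.infDist x Ωᶜ) δ) D) ^ s with hh₀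
  set w : EuclideanSpace ℝ (Fin n) → ℝ := fun x => u x * h₀ x with hw
  have hmem : ∀ x : EuclideanSpace ℝ (Fin n),
      min (max (Metric.infDist x Ωᶜ) δ) D ∈ Set.Icc δ D := fun x =>
    ⟨le_min (le_max_right _ _) hδD.le, min_le_right _ _⟩
  have hhpos : ∀ x, 0 < h₀ x := fun x =>
    Real.rpow_pos_of_pos (lt_of_lt_of_le hδ (hmem x).1) _
  have hclamp_eq : ∀ x ∈ tsupport u,
      min (max (Metric.infDist x Ωᶜ) δ) D = Metric.infDist x Ωᶜ := by
    intro x hx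
    rw [max_eq_left (hdK x hx).1.le, min_eq_left (hdK x hx).2.le]
  have hhx : ∀ x ∈ tsupport u, h₀ x = Metric.infDist x Ωᶜ ^ s := by
    intro x hx; rw [hh₀]; simp only; rw [hclamp_eq x hx]
  -- Lipschitz constant of r ↦ r ^ s on [δ, D]
  set Ks : ℝ := |s| * max (δ ^ (s-1)) (D ^ (s-1)) with hKs
  have hKs0 : 0 ≤ Ks := by
    apply mul_nonneg (abs_nonneg _)
    exact le_trans (Real.rpow_nonneg hδ.le _) (le_max_left _ _)
  have hlipIcc : ∀ a b : ℝ, a ∈ Set.Icc δ D → b ∈ Set.Icc δ D →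
      |a ^ s - b ^ s| ≤ Ks * |a - b| := by
    intro a b ha hb
    have hIccDiff : ∀ r ∈ Set.Icc δ D, DifferentiableAt ℝ (fun r : ℝ => r ^ s) r := by
      intro r hr
      exact (Real.hasDerivAt_rpow_const (p := s)
        (Or.inl (lt_of_lt_of_le hδ hr.1).ne')).differentiableAt
    have hIccBound : ∀ r ∈ Set.Icc δ D, ‖fderiv ℝ (fun r : ℝ => r ^ s) r‖ ≤ Ks := by
      intro r hr
      have hr0 : 0 < r := lt_of_lt_of_le hδ hr.1
      have hder : deriv (fun r : ℝ => r ^ s) r = s * r ^ (s-1) :=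
        (Real.hasDerivAt_rpow_const (p := s) (Or.inl hr0.ne')).deriv
      rw [← norm_deriv_eq_norm_fderiv, hder, Real.norm_eq_abs, abs_mul,
        abs_of_nonneg (Real.rpow_nonneg hr0.le _)]
      exact mul_le_mul_of_nonneg_left (rpow_le_max_aux hδ hr.1 hr.2) (abs_nonneg s)
    have := (convex_Icc δ D).norm_image_sub_le_of_norm_fderiv_le hIccDiff hIccBound hb ha
    simpa [Real.norm_eq_abs] using this
  have hh₀lip : LipschitzWith Ks.toNNReal h₀ := by
    apply LipschitzWith.of_dist_le_mul
    intro x y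
    have h2 : dist (min (max (Metric.infDist x Ωᶜ) δ) D) (min (max (Metric.infDist y Ωᶜ) δ) D)
        ≤ dist (Metric.infDist x Ωᶜ) (Metric.infDist y Ωᶜ) := by
      simpa using ((LipschitzWith.id.max_const δ).min_const D).dist_le_mul
        (Metric.infDist x Ωᶜ) (Metric.infDist y Ωᶜ)
    have h3 : dist (Metric.infDist x Ωᶜ) (Metric.infDist y Ωᶜ) ≤ dist x y := by
      simpa using (lipschitz_infDist_pt Ωᶜ).dist_le_mul x y
    have h1 : dist (h₀ x) (h₀ y)
        ≤ Ks * dist (min (max (Metric.infDist x Ωᶜ) δ) D) (min (max (Metric.infDist y Ωᶜ) δ) D) := by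
      rw [hh₀]; simp only [Real.dist_eq]
      exact hlipIcc _ _ (hmem x) (hmem y)
    rw [Real.coe_toNNReal _ hKs0]
    calc dist (h₀ x) (h₀ y) ≤ Ks * _ := h1
      _ ≤ Ks * dist x y := mul_le_mul_of_nonneg_left (le_trans h2 h3) hKs0
  -- bounds for u and h₀
  obtain ⟨z, hzK, hzmax⟩ := hKcomp.exists_isMaxOn hKne
    (continuous_abs.comp hLu.continuous).continuousOn
  set Mu : ℝ := |u z| with hMudef
  have hMu : ∀ x, |u x| ≤ Mu := by
    intro x
    by_cases hx : x ∈ tsupport u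
    · exact hzmax hx
    · rw [image_eq_zero_of_notMem_tsupport hx, abs_zero]; exact abs_nonneg _
  have hMu0 : 0 ≤ Mu := abs_nonneg _
  set Mh : ℝ := max (δ ^ s) (D ^ s) with hMhdef
  have hh₀bd : ∀ x, |h₀ x| ≤ Mh := by
    intro x
    rw [abs_of_pos (hhpos x)]
    exact rpow_le_max_aux hδ (hmem x).1 (hmem x).2
  have hMh0 : 0 ≤ Mh := le_trans (Real.rpow_nonneg hδ.le _) (le_max_left _ _)
  -- w is Lipschitz
  have hwlipc : 0 ≤ Mu * Ks + Mh * Lu :=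
    add_nonneg (mul_nonneg hMu0 hKs0) (mul_nonneg hMh0 Lu.coe_nonneg)
  have hwlip : LipschitzWith (Mu * Ks + Mh * (Lu:ℝ)).toNNReal w := by
    apply LipschitzWith.of_dist_le_mul
    intro x y
    have e2 : |u x * h₀ x - u y * h₀ y| ≤ |u x| * |h₀ x - h₀ y| + |h₀ y| * |u x - u y| := by
      have e : u x * h₀ x - u y * h₀ y = u x * (h₀ x - h₀ y) + (u x - u y) * h₀ y := by ring
      rw [e]
      refine le_trans (abs_add_le _ _) ?_
      rw [abs_mul, abs_mul, mul_comm |u x - u y| |h₀ y|]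
    have e3 : |h₀ x - h₀ y| ≤ Ks * dist x y := by
      have := hh₀lip.dist_le_mul x y
      rwa [Real.dist_eq, Real.coe_toNNReal _ hKs0] at this
    have e4 : |u x - u y| ≤ Lu * dist x y := by
      have := hLu.dist_le_mul x y
      rwa [Real.dist_eq] at this
    rw [Real.coe_toNNReal _ hwlipc, hw]
    simp only [Real.dist_eq]
    calc |u x * h₀ x - u y * h₀ y| ≤ |u x| * |h₀ x - h₀ y| + |h₀ y| * |u x - u y| := e2
      _ ≤ Mu * (Ks * dist x y) + Mh * ((Lu:ℝ) * dist x y) :=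
          add_le_add (mul_le_mul (hMu x) e3 (abs_nonneg _) hMu0)
            (mul_le_mul (hh₀bd y) e4 (abs_nonneg _) hMh0)
      _ = (Mu * Ks + Mh * (Lu:ℝ)) * dist x y := by ring
  have hwcs : HasCompactSupport w := by rw [hw]; exact hucs.mul_right
  have hwsup : tsupport w ⊆ Ω := by
    rw [hw]; exact (tsupport_mul_subset_left).trans hus
  -- apply the Hardy inequality to w
  have HW := hHardy w ⟨_, hwlip⟩ hwcs hwsup
  -- equality of the left integrands
  have hAeq : ∀ x, ENNReal.ofReal (|w x| ^ p * Metric.infDist x Ωᶜ ^ (β - p))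
      = ENNReal.ofReal (|u x| ^ p * Metric.infDist x Ωᶜ ^ (β' - p)) := by
    intro x
    by_cases hx : x ∈ tsupport u
    · have hdxpos : 0 < Metric.infDist x Ωᶜ := lt_trans hδ (hdK x hx).1
      have hwx : w x = u x * Metric.infDist x Ωᶜ ^ s := by
        rw [hw]; simp only; rw [hhx x hx]
      have e3 : Metric.infDist x Ωᶜ ^ (β' - β) * Metric.infDist x Ωᶜ ^ (β - p)
          = Metric.infDist x Ωᶜ ^ (β' - p) := by
        rw [← Real.rpow_add hdxpos]; congr 1; ring
      congr 1
      rw [hwx, abs_mul, abs_of_pos (Real.rpow_pos_of_pos hdxpos s),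
        Real.mul_rpow (abs_nonneg _) (Real.rpow_nonneg hdxpos.le _),
        ← Real.rpow_mul hdxpos.le, hsp]
      linear_combination |u x| ^ p * e3
    · have hux : u x = 0 := image_eq_zero_of_notMem_tsupport hx
      have hwx : w x = 0 := by rw [hw]; simp only; rw [hux, zero_mul]
      rw [hwx, hux, abs_zero, Real.zero_rpow hpne, zero_mul, zero_mul]
  -- pointwise a.e. bound for the gradient term
  have hbound : ∀ᵐ x ∂(volume.restrict Ω),
      ENNReal.ofReal (‖fderiv ℝ w x‖ ^ p * Metric.infDist x Ωᶜ ^ β)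
        ≤ ENNReal.ofReal ((2:ℝ) ^ p) *
            ENNReal.ofReal (‖fderiv ℝ u x‖ ^ p * Metric.infDist x Ωᶜ ^ β')
          + ENNReal.ofReal ((2:ℝ) ^ p * |s| ^ p) *
            ENNReal.ofReal (|u x| ^ p * Metric.infDist x Ωᶜ ^ (β' - p)) := by
    filter_upwards [ae_restrict_of_ae
      ((lipschitz_infDist_pt Ωᶜ).ae_differentiableAt (μ := volume)),
      ae_restrict_mem hΩopen.measurableSet] with x hdx hxΩ
    have hd_posx : 0 < Metric.infDist x Ωᶜ := hdΩ x hxΩ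
    by_cases hxK : x ∈ tsupport u
    · -- near x, h₀ agrees with d ^ s
      have hδx := hdK x hxK
      have hev : h₀ =ᶠ[nhds x] (fun y => Metric.infDist y Ωᶜ ^ s) := by
        have hV : ∀ᶠ y in nhds x, Metric.infDist y Ωᶜ ∈ Set.Ioo δ D :=
          hdcont.continuousAt.preimage_mem_nhds (Ioo_mem_nhds hδx.1 hδx.2)
        filter_upwards [hV] with y hy
        rw [hh₀]; simp only
        rw [max_eq_left hy.1.le, min_eq_left hy.2.le]
      have hpowd : HasFDerivAt (fun y => Metric.infDist y Ωᶜ ^ s)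
          ((s * Metric.infDist x Ωᶜ ^ (s-1)) •
            fderiv ℝ (fun y => Metric.infDist y Ωᶜ) x) x :=
        (hdx.hasFDerivAt).rpow_const (Or.inl hd_posx.ne')
      have hH : HasFDerivAt h₀
          ((s * Metric.infDist x Ωᶜ ^ (s-1)) •
            fderiv ℝ (fun y => Metric.infDist y Ωᶜ) x) x :=
        hpowd.congr_of_eventuallyEq hev
      have hnormH : ‖fderiv ℝ h₀ x‖ ≤ |s| * Metric.infDist x Ωᶜ ^ (s-1) := by
        rw [hH.fderiv, norm_smul, Real.norm_eq_abs, abs_mul,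
          abs_of_nonneg (Real.rpow_nonneg hd_posx.le _)]
        have hfd1 : ‖fderiv ℝ (fun y => Metric.infDist y Ωᶜ) x‖ ≤ 1 := by
          simpa using norm_fderiv_le_of_lipschitz ℝ (lipschitz_infDist_pt Ωᶜ)
        calc |s| * Metric.infDist x Ωᶜ ^ (s-1) * ‖fderiv ℝ (fun y => Metric.infDist y Ωᶜ) x‖
            ≤ |s| * Metric.infDist x Ωᶜ ^ (s-1) * 1 := by
              apply mul_le_mul_of_nonneg_left hfd1
              exact mul_nonneg (abs_nonneg _) (Real.rpow_nonneg hd_posx.le _)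
          _ = |s| * Metric.infDist x Ωᶜ ^ (s-1) := mul_one _
      by_cases hud : DifferentiableAt ℝ u x
      · have hfw : fderiv ℝ w x = u x • fderiv ℝ h₀ x + h₀ x • fderiv ℝ u x := by
          rw [hw]; exact fderiv_mul hud hH.differentiableAt
        set dx : ℝ := Metric.infDist x Ωᶜ with hdxdef
        have hna : ‖fderiv ℝ w x‖ ≤ dx ^ s * ‖fderiv ℝ u x‖ + |s| * dx ^ (s-1) * |u x| := by
          rw [hfw]
          calc ‖u x • fderiv ℝ h₀ x + h₀ x • fderiv ℝ u x‖
              ≤ ‖u x • fderiv ℝ h₀ x‖ + ‖h₀ x • fderiv ℝ u x‖ := norm_add_le _ _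
            _ = |u x| * ‖fderiv ℝ h₀ x‖ + |h₀ x| * ‖fderiv ℝ u x‖ := by
                rw [norm_smul, norm_smul, Real.norm_eq_abs, Real.norm_eq_abs]
            _ ≤ |u x| * (|s| * dx ^ (s-1)) + dx ^ s * ‖fderiv ℝ u x‖ := by
                apply add_le_add
                · exact mul_le_mul_of_nonneg_left hnormH (abs_nonneg _)
                · rw [hhx x hxK, abs_of_pos (Real.rpow_pos_of_pos hd_posx s)]
            _ = dx ^ s * ‖fderiv ℝ u x‖ + |s| * dx ^ (s-1) * |u x| := by ring
        have ha0 : 0 ≤ dx ^ s * ‖fderiv ℝ u x‖ :=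
          mul_nonneg (Real.rpow_nonneg hd_posx.le _) (norm_nonneg _)
        have hb0 : 0 ≤ |s| * dx ^ (s-1) * |u x| :=
          mul_nonneg (mul_nonneg (abs_nonneg _) (Real.rpow_nonneg hd_posx.le _)) (abs_nonneg _)
        have haP : (dx ^ s * ‖fderiv ℝ u x‖) ^ p * dx ^ β = ‖fderiv ℝ u x‖ ^ p * dx ^ β' := by
          have e : dx ^ (β' - β) * dx ^ β = dx ^ β' := by
            rw [← Real.rpow_add hd_posx]; congr 1; ring
          rw [Real.mul_rpow (Real.rpow_nonneg hd_posx.le _) (norm_nonneg _),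
            ← Real.rpow_mul hd_posx.le, hsp]
          linear_combination ‖fderiv ℝ u x‖ ^ p * e
        have hbP : (|s| * dx ^ (s-1) * |u x|) ^ p * dx ^ β
            = |s| ^ p * (|u x| ^ p * dx ^ (β' - p)) := by
          have hsp2 : (s - 1) * p = β' - β - p := by
            rw [sub_mul, one_mul, hsp]
          have e : dx ^ (β' - β - p) * dx ^ β = dx ^ (β' - p) := by
            rw [← Real.rpow_add hd_posx]; congr 1; ring
          rw [Real.mul_rpow (mul_nonneg (abs_nonneg _) (Real.rpow_nonneg hd_posx.le _))
            (abs_nonneg _), Real.mul_rpow (abs_nonneg _) (Real.rpow_nonneg hd_posx.le _),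
            ← Real.rpow_mul hd_posx.le, hsp2]
          linear_combination |s| ^ p * |u x| ^ p * e
        have RQ : ‖fderiv ℝ w x‖ ^ p * dx ^ β
            ≤ 2 ^ p * (‖fderiv ℝ u x‖ ^ p * dx ^ β')
              + (2 ^ p * |s| ^ p) * (|u x| ^ p * dx ^ (β' - p)) := by
          have hdb : 0 ≤ dx ^ β := Real.rpow_nonneg hd_posx.le _
          calc ‖fderiv ℝ w x‖ ^ p * dx ^ β
              ≤ (dx ^ s * ‖fderiv ℝ u x‖ + |s| * dx ^ (s-1) * |u x|) ^ p * dx ^ β :=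
                mul_le_mul_of_nonneg_right
                  (Real.rpow_le_rpow (norm_nonneg _) hna hp0.le) hdb
            _ ≤ (2 ^ p * (dx ^ s * ‖fderiv ℝ u x‖) ^ p
                  + 2 ^ p * (|s| * dx ^ (s-1) * |u x|) ^ p) * dx ^ β :=
                mul_le_mul_of_nonneg_right (add_rpow_le_aux ha0 hb0 hp0.le) hdb
            _ = 2 ^ p * ((dx ^ s * ‖fderiv ℝ u x‖) ^ p * dx ^ β)
                  + 2 ^ p * ((|s| * dx ^ (s-1) * |u x|) ^ p * dx ^ β) := by ring
            _ = _ := by rw [haP, hbP]; ring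
        calc ENNReal.ofReal (‖fderiv ℝ w x‖ ^ p * dx ^ β)
            ≤ ENNReal.ofReal (2 ^ p * (‖fderiv ℝ u x‖ ^ p * dx ^ β')
                + (2 ^ p * |s| ^ p) * (|u x| ^ p * dx ^ (β' - p))) :=
              ENNReal.ofReal_le_ofReal RQ
          _ ≤ ENNReal.ofReal (2 ^ p * (‖fderiv ℝ u x‖ ^ p * dx ^ β'))
                + ENNReal.ofReal ((2 ^ p * |s| ^ p) * (|u x| ^ p * dx ^ (β' - p))) :=
              ENNReal.ofReal_add_le
          _ = _ := by
              rw [ENNReal.ofReal_mul h2p.le,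
                ENNReal.ofReal_mul (mul_nonneg h2p.le (Real.rpow_nonneg (abs_nonneg _) _))]
      · -- u is not differentiable at x, hence neither is w, and fderiv w x = 0
        have hwnd : ¬ DifferentiableAt ℝ w x := by
          intro hw'
          apply hud
          have hinv : DifferentiableAt ℝ (fun y => (h₀ y)⁻¹) x :=
            hH.differentiableAt.inv (hhpos x).ne'
          have hueq : u = fun y => w y * (h₀ y)⁻¹ := by
            funext y
            rw [hw]; simp only
            exact (mul_inv_cancel_right₀ (hhpos y).ne' (u y)).symm
          rw [hueq]
          exact hw'.mul hinv
        rw [fderiv_zero_of_not_differentiableAt hwnd, norm_zero, Real.zero_rpow hpne,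
          zero_mul, ENNReal.ofReal_zero]
        exact zero_le
    · -- x outside the support of u: w vanishes near x
      have h0 : w =ᶠ[nhds x] (fun _ => (0:ℝ)) := by
        filter_upwards [(isClosed_tsupport u).isOpen_compl.mem_nhds hxK] with y hy
        rw [hw]; simp only
        rw [image_eq_zero_of_notMem_tsupport hy, zero_mul]
      have : fderiv ℝ w x = 0 := by
        rw [h0.fderiv_eq, fderiv_const_apply]
      rw [this, norm_zero, Real.zero_rpow hpne, zero_mul, ENNReal.ofReal_zero]
      exact zero_le
  -- measurability for the splitting
  have hmeas1 : Measurable fun x : EuclideanSpace ℝ (Fin n) =>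
      ENNReal.ofReal (‖fderiv ℝ u x‖ ^ p * Metric.infDist x Ωᶜ ^ β') :=
    (((measurable_fderiv ℝ u).norm.pow measurable_const).mul
      (((continuous_infDist_pt Ωᶜ).measurable).pow measurable_const)).ennreal_ofReal
  have hsplit : (∫⁻ x in Ω, (ENNReal.ofReal ((2:ℝ) ^ p) *
        ENNReal.ofReal (‖fderiv ℝ u x‖ ^ p * Metric.infDist x Ωᶜ ^ β')
      + ENNReal.ofReal ((2:ℝ) ^ p * |s| ^ p) *
        ENNReal.ofReal (|u x| ^ p * Metric.infDist x Ωᶜ ^ (β' - p))))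
      = ENNReal.ofReal ((2:ℝ) ^ p) *
          (∫⁻ x in Ω, ENNReal.ofReal (‖fderiv ℝ u x‖ ^ p * Metric.infDist x Ωᶜ ^ β'))
        + ENNReal.ofReal ((2:ℝ) ^ p * |s| ^ p) *
          (∫⁻ x in Ω, ENNReal.ofReal (|u x| ^ p * Metric.infDist x Ωᶜ ^ (β' - p))) := by
    rw [lintegral_add_left (hmeas1.const_mul _),
      lintegral_const_mul' _ _ ENNReal.ofReal_ne_top,
      lintegral_const_mul' _ _ ENNReal.ofReal_ne_top]
  -- finiteness of the left-hand side
  have hAtop : (∫⁻ x in Ω, ENNReal.ofReal (|u x| ^ p * Metric.infDist x Ωᶜ ^ (β' - p))) ≠ ⊤ := by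
    set cB : ℝ := Mu ^ p * max (δ ^ (β' - p)) (D ^ (β' - p)) with hcB
    have hptwise : ∀ x, ENNReal.ofReal (|u x| ^ p * Metric.infDist x Ωᶜ ^ (β' - p))
        ≤ (tsupport u).indicator (fun _ => ENNReal.ofReal cB) x := by
      intro x
      by_cases hx : x ∈ tsupport u
      · rw [Set.indicator_of_mem hx]
        apply ENNReal.ofReal_le_ofReal
        apply mul_le_mul
        · exact Real.rpow_le_rpow (abs_nonneg _) (hMu x) hp0.le
        · exact rpow_le_max_aux hδ (hdK x hx).1.le (hdK x hx).2.le
        · exact Real.rpow_nonneg (Metric.infDist_nonneg) _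
        · exact Real.rpow_nonneg hMu0 _
      · rw [Set.indicator_of_notMem hx, image_eq_zero_of_notMem_tsupport hx, abs_zero,
          Real.zero_rpow hpne, zero_mul, ENNReal.ofReal_zero]
    have hle : (∫⁻ x in Ω, ENNReal.ofReal (|u x| ^ p * Metric.infDist x Ωᶜ ^ (β' - p)))
        ≤ ENNReal.ofReal cB * volume (tsupport u) := by
      calc (∫⁻ x in Ω, ENNReal.ofReal (|u x| ^ p * Metric.infDist x Ωᶜ ^ (β' - p)))
          ≤ ∫⁻ x, ENNReal.ofReal (|u x| ^ p * Metric.infDist x Ωᶜ ^ (β' - p)) :=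
            lintegral_mono' Measure.restrict_le_self le_rfl
        _ ≤ ∫⁻ x, (tsupport u).indicator (fun _ => ENNReal.ofReal cB) x :=
            lintegral_mono hptwise
        _ = ENNReal.ofReal cB * volume (tsupport u) := by
            rw [lintegral_indicator (isClosed_tsupport u).measurableSet]
            exact setLIntegral_const _ _
    exact ne_top_of_le_ne_top
      (ENNReal.mul_ne_top ENNReal.ofReal_ne_top hKcomp.measure_lt_top.ne) hle
  -- the two coefficient bounds
  have hc1 : ENNReal.ofReal C₀ * ENNReal.ofReal ((2:ℝ) ^ p) ≤ ENNReal.ofReal (M * 2 ^ p) := by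
    calc ENNReal.ofReal C₀ * ENNReal.ofReal ((2:ℝ) ^ p)
        ≤ ENNReal.ofReal M * ENNReal.ofReal ((2:ℝ) ^ p) :=
          mul_le_mul_left (ENNReal.ofReal_le_ofReal (le_max_left _ _)) _
      _ = ENNReal.ofReal (M * 2 ^ p) := (ENNReal.ofReal_mul hM0.le).symm
  have hc2 : ENNReal.ofReal C₀ * ENNReal.ofReal ((2:ℝ) ^ p * |s| ^ p)
      ≤ ENNReal.ofReal (1/2) := by
    have hsple : |s| ^ p ≤ t ^ p := Real.rpow_le_rpow (abs_nonneg _) hs_le hp0.le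
    have hr : M * (2 ^ p * |s| ^ p) ≤ 1/2 := by
      have h1 : M * 2 ^ p * |s| ^ p ≤ M * 2 ^ p * t ^ p :=
        mul_le_mul_of_nonneg_left hsple (by positivity)
      nlinarith [hkey]
    calc ENNReal.ofReal C₀ * ENNReal.ofReal ((2:ℝ) ^ p * |s| ^ p)
        ≤ ENNReal.ofReal M * ENNReal.ofReal ((2:ℝ) ^ p * |s| ^ p) :=
          mul_le_mul_left (ENNReal.ofReal_le_ofReal (le_max_left _ _)) _
      _ = ENNReal.ofReal (M * (2 ^ p * |s| ^ p)) := (ENNReal.ofReal_mul hM0.le).symm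
      _ ≤ ENNReal.ofReal (1/2) := ENNReal.ofReal_le_ofReal hr
  -- the main chain
  have htot : (∫⁻ x in Ω, ENNReal.ofReal (|u x| ^ p * Metric.infDist x Ωᶜ ^ (β' - p)))
      ≤ ENNReal.ofReal (M * 2 ^ p) *
          (∫⁻ x in Ω, ENNReal.ofReal (‖fderiv ℝ u x‖ ^ p * Metric.infDist x Ωᶜ ^ β'))
        + ENNReal.ofReal (1/2) *
          (∫⁻ x in Ω, ENNReal.ofReal (|u x| ^ p * Metric.infDist x Ωᶜ ^ (β' - p))) := by
    calc (∫⁻ x in Ω, ENNReal.ofReal (|u x| ^ p * Metric.infDist x Ωᶜ ^ (β' - p)))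
        = ∫⁻ x in Ω, ENNReal.ofReal (|w x| ^ p * Metric.infDist x Ωᶜ ^ (β - p)) :=
          (lintegral_congr hAeq).symm
      _ ≤ ENNReal.ofReal C₀ *
            ∫⁻ x in Ω, ENNReal.ofReal (‖fderiv ℝ w x‖ ^ p * Metric.infDist x Ωᶜ ^ β) := HW
      _ ≤ ENNReal.ofReal C₀ * ∫⁻ x in Ω, (ENNReal.ofReal ((2:ℝ) ^ p) *
            ENNReal.ofReal (‖fderiv ℝ u x‖ ^ p * Metric.infDist x Ωᶜ ^ β')
          + ENNReal.ofReal ((2:ℝ) ^ p * |s| ^ p) *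
            ENNReal.ofReal (|u x| ^ p * Metric.infDist x Ωᶜ ^ (β' - p))) :=
          mul_le_mul_right (lintegral_mono_ae hbound) _
      _ = ENNReal.ofReal C₀ * ENNReal.ofReal ((2:ℝ) ^ p) *
            (∫⁻ x in Ω, ENNReal.ofReal (‖fderiv ℝ u x‖ ^ p * Metric.infDist x Ωᶜ ^ β'))
          + ENNReal.ofReal C₀ * ENNReal.ofReal ((2:ℝ) ^ p * |s| ^ p) *
            (∫⁻ x in Ω, ENNReal.ofReal (|u x| ^ p * Metric.infDist x Ωᶜ ^ (β' - p))) := by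
          rw [hsplit, mul_add, mul_assoc, mul_assoc]
      _ ≤ _ := add_le_add (mul_le_mul_left hc1 _) (mul_le_mul_left hc2 _)
  -- absorption
  have hhalf_ne : ENNReal.ofReal (1/2) *
      (∫⁻ x in Ω, ENNReal.ofReal (|u x| ^ p * Metric.infDist x Ωᶜ ^ (β' - p))) ≠ ⊤ :=
    ENNReal.mul_ne_top ENNReal.ofReal_ne_top hAtop
  have h5 : ENNReal.ofReal (1/2) *
      (∫⁻ x in Ω, ENNReal.ofReal (|u x| ^ p * Metric.infDist x Ωᶜ ^ (β' - p)))
      ≤ ENNReal.ofReal (M * 2 ^ p) *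
        (∫⁻ x in Ω, ENNReal.ofReal (‖fderiv ℝ u x‖ ^ p * Metric.infDist x Ωᶜ ^ β')) := by
    refine (ENNReal.add_le_add_iff_right hhalf_ne).1 ?_
    refine le_trans (le_of_eq ?_) htot
    rw [← add_mul, ← ENNReal.ofReal_add (by norm_num) (by norm_num)]
    norm_num
  calc (∫⁻ x in Ω, ENNReal.ofReal (|u x| ^ p * Metric.infDist x Ωᶜ ^ (β' - p)))
      = (ENNReal.ofReal 2 * ENNReal.ofReal (1/2)) *
          (∫⁻ x in Ω, ENNReal.ofReal (|u x| ^ p * Metric.infDist x Ωᶜ ^ (β' - p))) := by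
        rw [← ENNReal.ofReal_mul (by norm_num : (0:ℝ) ≤ 2)]
        norm_num
    _ = ENNReal.ofReal 2 * (ENNReal.ofReal (1/2) *
          (∫⁻ x in Ω, ENNReal.ofReal (|u x| ^ p * Metric.infDist x Ωᶜ ^ (β' - p)))) := by
        rw [mul_assoc]
    _ ≤ ENNReal.ofReal 2 * (ENNReal.ofReal (M * 2 ^ p) *
          (∫⁻ x in Ω, ENNReal.ofReal (‖fderiv ℝ u x‖ ^ p * Metric.infDist x Ωᶜ ^ β'))) :=
        mul_le_mul_right h5 _
    _ = ENNReal.ofReal (2 * (M * 2 ^ p)) *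
          (∫⁻ x in Ω, ENNReal.ofReal (‖fderiv ℝ u x‖ ^ p * Metric.infDist x Ωᶜ ^ β')) := by
        rw [ENNReal.ofReal_mul (by norm_num : (0:ℝ) ≤ 2), mul_assoc]
end
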